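/- arXiv:2409.13883 — 5 statements merged into one kernel-verified Lean document; each statement's English description precedes it below -/
import Mathlib

section
/- For all i, j ∈ I: 4 · |{w ∈ W : ℓ(s_i w s_j) = ℓ(w) − 2}| + |{w ∈ W : s_i w = w s_j}| = |W|. (This is the counting identity, obtained by analyzing the Klein four-group action w ↦ s_i w, w ↦ w s_j on W, that underlies the computation of the cardinality of Γ(W) = {(w, i, j) : ℓ(s_i w s_j) = ℓ(w) − 2}.) -/
open CoxeterSystem

namespace NilpotencyIndices

variable {B : Type*} {W : Type*} [Group W] {M : CoxeterMatrix B}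

/-- The set `Γ(W)` of triples `(w, i, j)` with `ℓ(sᵢ w sⱼ) = ℓ(w) - 2`
(stated as `ℓ(sᵢ w sⱼ) + 2 = ℓ(w)` to avoid truncated subtraction). -/
def InGamma (cs : CoxeterSystem M W) (x : W × B × B) : Prop :=
  cs.length (cs.simple x.2.1 * x.1 * cs.simple x.2.2) + 2 = cs.length x.1

/-- The weak left (Bruhat) order: `v ≤_L w` iff `ℓ(v) + ℓ(w v⁻¹) = ℓ(w)`. -/
def WeakLeftLE (cs : CoxeterSystem M W) (v w : W) : Prop :=
  cs.length v + cs.length (w * v⁻¹) = cs.length w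

/-- The weak right (Bruhat) order: `v ≤_R w` iff `ℓ(v) + ℓ(v⁻¹ w) = ℓ(w)`. -/
def WeakRightLE (cs : CoxeterSystem M W) (v w : W) : Prop :=
  cs.length v + cs.length (v⁻¹ * w) = cs.length w

/-- `v(α_a) = α_b`: the group-theoretic condition `v sₐ v⁻¹ = s_b` and `ℓ(v sₐ) = ℓ(v) + 1`. -/
def MapsSimple (cs : CoxeterSystem M W) (v : W) (a b : B) : Prop :=
  v * cs.simple a * v⁻¹ = cs.simple b ∧ cs.length (v * cs.simple a) = cs.length v + 1

/-- `(w, i, j) →_L (u, i', j')` iff both triples are in `Γ(W)`, `u ≤_L w`, `j' = j`, and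
`(w u⁻¹)(α_{i'}) = α_i`. -/
def RedL (cs : CoxeterSystem M W) (x y : W × B × B) : Prop :=
  InGamma cs x ∧ InGamma cs y ∧ WeakLeftLE cs y.1 x.1 ∧ y.2.2 = x.2.2 ∧
    MapsSimple cs (x.1 * y.1⁻¹) y.2.1 x.2.1

/-- `(w, i, j) →_R (u, i', j')` iff both triples are in `Γ(W)`, `u ≤_R w`, `i' = i`, and
`(u⁻¹ w)(α_j) = α_{j'}`. -/
def RedR (cs : CoxeterSystem M W) (x y : W × B × B) : Prop :=
  InGamma cs x ∧ InGamma cs y ∧ WeakRightLE cs y.1 x.1 ∧ y.2.1 = x.2.1 ∧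
    MapsSimple cs (y.1⁻¹ * x.1) x.2.2 y.2.2

/-- `→`: the reflexive-transitive closure of the union of `→_L` and `→_R`. -/
def Red (cs : CoxeterSystem M W) : (W × B × B) → (W × B × B) → Prop :=
  Relation.ReflTransGen (fun x y => RedL cs x y ∨ RedR cs x y)

/-- `↔`: the equivalence relation generated by `→`. -/
def EquivRed (cs : CoxeterSystem M W) : (W × B × B) → (W × B × B) → Prop :=
  Relation.EqvGen (Red cs)

/-- The alternating word `a, b, a, b, …` with `n` letters, starting with `a`. -/
def altWord (a b : B) : ℕ → List B
  | 0 => []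
  | n + 1 => a :: altWord b a n

/-- `w₀(a, b)`: the alternating product `sₐ s_b sₐ ⋯` with `M a b` factors, the longest element
of the subgroup generated by `sₐ` and `s_b` when `M a b` is finite (i.e. nonzero). -/
def w0 (cs : CoxeterSystem M W) (a b : B) : W :=
  cs.wordProd (altWord a b (M a b))

/-- An element is bigrassmannian if it has exactly one left descent and exactly one
right descent. -/
def Bigrassmannian (cs : CoxeterSystem M W) (w : W) : Prop :=
  (∃! i, cs.IsLeftDescent w i) ∧ (∃! j, cs.IsRightDescent w j)

/-- The support of `w`: the set of indices appearing in some reduced word for `w`. -/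
def Supp (cs : CoxeterSystem M W) (w : W) : Set B :=
  {i | ∃ l : List B, cs.IsReduced l ∧ cs.wordProd l = w ∧ i ∈ l}

/-- The relation `(w, i, j) →_{(k,L)} (u, i', j')`. -/
def RedkL (cs : CoxeterSystem M W) (k : B) (x y : W × B × B) : Prop :=
  cs.length y.1 < cs.length x.1 ∧ RedR cs (x.1 * cs.simple k, x.2.1, x.2.2) x ∧
    RedL cs (x.1 * cs.simple k, x.2.1, x.2.2) y ∧ WeakLeftLE cs y.1 x.1

/-- The relation `(w, i, j) →_{(k,R)} (u, i', j')`. -/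
def RedkR (cs : CoxeterSystem M W) (k : B) (x y : W × B × B) : Prop :=
  cs.length y.1 < cs.length x.1 ∧ RedL cs (cs.simple k * x.1, x.2.1, x.2.2) x ∧
    RedR cs (cs.simple k * x.1, x.2.1, x.2.2) y ∧ WeakRightLE cs y.1 x.1

/-- The orthogonality condition for a bigrassmannian element `w` with `D_L(w) = {i}` and
`D_R(w) = {j}`. -/
def OrthCond (cs : CoxeterSystem M W) (w : W) (i j : B) : Prop :=
  (∀ a b : B, M a j = 2 → MapsSimple cs w a b → M b i = 2) ∧
  (∀ a b : B, M a i = 2 → MapsSimple cs w⁻¹ a b → M b j = 2)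


open List

attribute [local instance] Classical.propDecidable

lemma conj_self_eq_simple_iff (cs : CoxeterSystem M W) (i : B) (v t : W) :
    v * t * v⁻¹ = cs.simple i ↔ t = v⁻¹ * cs.simple i * v := by
  constructor
  · intro h; rw [← h]; group
  · intro h; rw [h]; group

noncomputable def sigmaPerm (cs : CoxeterSystem M W) (i : B) : Equiv.Perm (W × ℤˣ) :=
  Function.Involutive.toPerm
    (fun x => (cs.simple i * x.1 * cs.simple i, if x.1 = cs.simple i then -x.2 else x.2))
    (by
      rintro ⟨t, e⟩
      have h1 : cs.simple i * (cs.simple i * t * cs.simple i) * cs.simple i = t := by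
        rw [← mul_assoc, ← mul_assoc, cs.simple_mul_simple_self, one_mul,
          cs.simple_mul_simple_cancel_right]
      have h2 : cs.simple i * t * cs.simple i = cs.simple i ↔ t = cs.simple i := by
        constructor
        · intro h
          calc t = cs.simple i * (cs.simple i * t * cs.simple i) * cs.simple i := h1.symm
          _ = cs.simple i * cs.simple i * cs.simple i := by rw [h]
          _ = cs.simple i := by rw [cs.simple_mul_simple_self, one_mul]
        · intro h
          rw [h, cs.simple_mul_simple_cancel_right]
      simp only [Prod.mk.injEq, h1, h2]
      refine ⟨trivial, ?_⟩
      by_cases h : t = cs.simple i <;> simp [h])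

lemma sigmaPerm_apply (cs : CoxeterSystem M W) (i : B) (t : W) (e : ℤˣ) :
    sigmaPerm cs i (t, e) =
      (cs.simple i * t * cs.simple i, if t = cs.simple i then -e else e) := rfl

lemma sigmaPerm_prod_apply (cs : CoxeterSystem M W) (ω : List B) (t : W) (e : ℤˣ) :
    (List.map (sigmaPerm cs) ω).prod (t, e) =
      (cs.wordProd ω * t * (cs.wordProd ω)⁻¹,
        (-1) ^ (List.count t (cs.rightInvSeq ω)) * e) := by
  induction ω with
  | nil => simp
  | cons i ω ih =>
    rw [List.map_cons, List.prod_cons, Equiv.Perm.mul_apply, ih, sigmaPerm_apply]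
    have hris : cs.rightInvSeq (i :: ω) =
        ((cs.wordProd ω)⁻¹ * cs.simple i * cs.wordProd ω) :: cs.rightInvSeq ω := rfl
    rw [hris, List.count_cons, cs.wordProd_cons]
    have hiff := conj_self_eq_simple_iff cs i (cs.wordProd ω) t
    by_cases hc : cs.wordProd ω * t * (cs.wordProd ω)⁻¹ = cs.simple i
    · have ht : ((cs.wordProd ω)⁻¹ * cs.simple i * cs.wordProd ω) = t := (hiff.mp hc).symm
      rw [if_pos hc, if_pos (beq_iff_eq.mpr ht)]
      simp only [Prod.mk.injEq]
      refine ⟨by rw [mul_inv_rev, cs.inv_simple]; group, ?_⟩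
      rw [pow_succ, mul_neg_one, neg_mul]
    · have ht : ¬ ((cs.wordProd ω)⁻¹ * cs.simple i * cs.wordProd ω) = t := by
        intro h; exact hc (hiff.mpr h.symm)
      rw [if_neg hc, if_neg (by simpa using ht)]
      simp only [Prod.mk.injEq]
      exact ⟨by rw [mul_inv_rev, cs.inv_simple]; group, by rw [add_zero]⟩


section Dihedral
variable {G : Type*} [Group G] {a b : G} (ha : a * a = 1) (hb : b * b = 1)

include ha hb in
lemma dihedral_semiconj (k : ℕ) : b * (a * b) ^ k = ((a * b) ^ k)⁻¹ * b := by
  have hainv : a⁻¹ = a := inv_eq_of_mul_eq_one_right ha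
  have hbinv : b⁻¹ = b := inv_eq_of_mul_eq_one_right hb
  have h : SemiconjBy b (a * b) (a * b)⁻¹ := by
    show b * (a * b) = (a * b)⁻¹ * b
    rw [mul_inv_rev, hainv, hbinv, mul_assoc]
  have := (h.pow_right k).eq
  rwa [inv_pow] at this

include ha hb in
lemma dihedral_conj_even (k : ℕ) :
    ((a * b) ^ k)⁻¹ * b * (a * b) ^ k = b * (a * b) ^ (k + k) := by
  rw [pow_add, ← mul_assoc, dihedral_semiconj ha hb k]

include ha hb in
lemma dihedral_conj_odd (k : ℕ) :
    (b * (a * b) ^ k)⁻¹ * a * (b * (a * b) ^ k) = b * (a * b) ^ (k + k + 1) := by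
  have hbinv : b⁻¹ = b := inv_eq_of_mul_eq_one_right hb
  calc (b * (a * b) ^ k)⁻¹ * a * (b * (a * b) ^ k)
      = ((a * b) ^ k)⁻¹ * b⁻¹ * a * (b * (a * b) ^ k) := by rw [mul_inv_rev]
    _ = ((a * b) ^ k)⁻¹ * b * ((a * b) * (a * b) ^ k) := by rw [hbinv]; simp only [mul_assoc]
    _ = ((a * b) ^ k)⁻¹ * b * (a * b) ^ (k + 1) := by rw [pow_succ']
    _ = b * (a * b) ^ k * (a * b) ^ (k + 1) := by rw [← dihedral_semiconj ha hb k]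
    _ = b * (a * b) ^ (k + k + 1) := by
        rw [mul_assoc, ← pow_add]
        congr 2

end Dihedral

lemma prod_map_alternatingWord {G : Type*} [Monoid G] (f : B → G) (i i' : B) (m : ℕ) :
    (List.map f (alternatingWord i i' (2 * m))).prod = (f i * f i') ^ m := by
  induction m with
  | zero => simp [alternatingWord]
  | succ m ih =>
    have h2 : 2 * (m + 1) = (2 * m + 1) + 1 := by ring
    rw [h2, alternatingWord_succ, alternatingWord_succ, List.concat_eq_append,
      List.concat_eq_append, List.map_append, List.map_append]
    simp [ih, pow_succ, mul_assoc]

lemma wordProd_alternatingWord (cs : CoxeterSystem M W) (i i' : B) (m : ℕ) :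
    cs.wordProd (alternatingWord i i' (2 * m)) = (cs.simple i * cs.simple i') ^ m :=
  prod_map_alternatingWord cs.simple i i' m

lemma altWord_drop (i i' : B) : ∀ (k n : ℕ),
    (alternatingWord i i' n).drop k = alternatingWord i i' (n - k) := by
  intro k
  induction k with
  | zero => intro n; simp
  | succ l ih =>
    intro n
    cases n with
    | zero => simp [alternatingWord]
    | succ m =>
      rw [alternatingWord_succ', List.drop_succ_cons, ih m]
      congr 1
      omega

lemma conj_alt (cs : CoxeterSystem M W) (i i' : B) (e : ℕ) :
    (cs.wordProd (alternatingWord i i' e))⁻¹ *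
        (if Even e then cs.simple i' else cs.simple i) * cs.wordProd (alternatingWord i i' e) =
      cs.simple i' * (cs.simple i * cs.simple i') ^ e := by
  have ha := cs.simple_mul_simple_self i
  have hb := cs.simple_mul_simple_self i'
  rcases Nat.even_or_odd e with he | he
  · obtain ⟨q, hq⟩ := he
    rw [if_pos ⟨q, hq⟩, cs.prod_alternatingWord_eq_mul_pow, if_pos ⟨q, hq⟩, one_mul]
    have hdiv : e / 2 = q := by omega
    rw [hdiv, hq]
    exact dihedral_conj_even ha hb q
  · obtain ⟨q, hq⟩ := he
    have hne : ¬ Even e := by rw [hq]; simp [parity_simps]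
    rw [if_neg hne, cs.prod_alternatingWord_eq_mul_pow, if_neg hne]
    have hdiv : e / 2 = q := by omega
    have hq' : e = q + q + 1 := by omega
    rw [hdiv, hq']
    exact dihedral_conj_odd ha hb q

lemma altWord_get? (i i' : B) (n j : ℕ) (h : j < n) :
    (alternatingWord i i' n)[j]? = some (if Even (n - (j + 1)) then i' else i) := by
  have hlen : j < (alternatingWord i i' n).length := by simpa using h
  rw [List.getElem?_eq_getElem hlen]
  have hd := (List.drop_eq_getElem_cons hlen).symm
  rw [altWord_drop, altWord_drop] at hd
  have hn : n - j = (n - (j + 1)) + 1 := by omega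
  rw [hn, alternatingWord_succ'] at hd
  exact congrArg some (List.head_eq_of_cons_eq hd)

lemma ris_alt_getD (cs : CoxeterSystem M W) (i i' : B) (n j : ℕ) (h : j < n) :
    (cs.rightInvSeq (alternatingWord i i' n)).getD j 1 =
      cs.simple i' * (cs.simple i * cs.simple i') ^ (n - (j + 1)) := by
  rw [cs.getD_rightInvSeq, altWord_get? i i' n j h, altWord_drop]
  have : (Option.map cs.simple (some (if Even (n - (j + 1)) then i' else i))).getD 1 =
      (if Even (n - (j + 1)) then cs.simple i' else cs.simple i) := by
    by_cases hp : Even (n - (j + 1)) <;> simp [hp]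
  rw [this]
  exact conj_alt cs i i' (n - (j + 1))

lemma count_ris_alt_even (cs : CoxeterSystem M W) (i i' : B) (t : W) :
    Even (List.count t (cs.rightInvSeq (alternatingWord i i' (2 * M i i')))) := by
  set m := M i i' with hm
  set l := cs.rightInvSeq (alternatingWord i i' (2 * m)) with hl
  have hlen : l.length = 2 * m := by
    rw [hl, cs.length_rightInvSeq, length_alternatingWord]
  have hgetD : ∀ j, j < 2 * m → l.getD j 1 =
      cs.simple i' * (cs.simple i * cs.simple i') ^ (2 * m - (j + 1)) := by
    intro j hj
    exact ris_alt_getD cs i i' (2 * m) j hj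
  have heq : l.take m = l.drop m := by
    apply List.ext_getElem
    · simp [hlen]; omega
    · intro k h1 h2
      have hk : k < m := by simp [hlen] at h1; omega
      have e1 : (l.take m)[k] = l[k]'(by omega) := by
        simp
      have e2 : (l.drop m)[k] = l[m + k]'(by omega) := by
        simp
      rw [e1, e2]
      have g1 : l[k]'(by omega) = l.getD k 1 := by
        rw [List.getD_eq_getElem?_getD, List.getElem?_eq_getElem (by omega : k < l.length)]
        rfl
      have g2 : l[m + k]'(by omega) = l.getD (m + k) 1 := by
        rw [List.getD_eq_getElem?_getD, List.getElem?_eq_getElem (by omega : m + k < l.length)]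
        rfl
      rw [g1, g2, hgetD k (by omega), hgetD (m + k) (by omega)]
      have hexp : 2 * m - (k + 1) = (m - (k + 1)) + m := by omega
      rw [hexp, pow_add, hm, cs.simple_mul_simple_pow i i', mul_one]
      congr 2
      omega
  have : List.count t l = List.count t (l.take m) + List.count t (l.take m) := by
    calc List.count t l = List.count t (l.take m ++ l.drop m) := by rw [List.take_append_drop]
    _ = List.count t (l.take m) + List.count t (l.drop m) := List.count_append
    _ = List.count t (l.take m) + List.count t (l.take m) := by rw [← heq]
  exact ⟨List.count t (l.take m), this⟩

lemma sigmaPerm_liftable (cs : CoxeterSystem M W) : M.IsLiftable (sigmaPerm cs) := by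
  intro i i'
  rw [← prod_map_alternatingWord (sigmaPerm cs) i i' (M i i')]
  apply Equiv.ext
  rintro ⟨t, e⟩
  rw [sigmaPerm_prod_apply]
  have h1 : cs.wordProd (alternatingWord i i' (2 * M i i')) = 1 := by
    rw [wordProd_alternatingWord, cs.simple_mul_simple_pow]
  rw [h1, (count_ris_alt_even cs i i' t).neg_one_pow]
  simp

noncomputable def pRep (cs : CoxeterSystem M W) : W →* Equiv.Perm (W × ℤˣ) :=
  cs.lift ⟨sigmaPerm cs, sigmaPerm_liftable cs⟩

lemma pRep_simple (cs : CoxeterSystem M W) (i : B) :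
    pRep cs (cs.simple i) = sigmaPerm cs i :=
  cs.lift_apply_simple (sigmaPerm_liftable cs) i

lemma pRep_apply (cs : CoxeterSystem M W) (ω : List B) (t : W) (e : ℤˣ) :
    pRep cs (cs.wordProd ω) (t, e) =
      (cs.wordProd ω * t * (cs.wordProd ω)⁻¹,
        (-1) ^ (List.count t (cs.rightInvSeq ω)) * e) := by
  have h0 : cs.wordProd ω = (List.map cs.simple ω).prod := rfl
  have h1 : pRep cs (cs.wordProd ω) = (List.map (sigmaPerm cs) ω).prod := by
    rw [h0, map_list_prod (pRep cs), List.map_map]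
    apply congrArg
    apply List.map_congr_left
    intro b _
    exact pRep_simple cs b
  rw [h1, sigmaPerm_prod_apply]

lemma pRep_of_rightDescent (cs : CoxeterSystem M W) (w : W) (j : B)
    (h : cs.length (w * cs.simple j) < cs.length w) :
    pRep cs w (cs.simple j, 1) = (w * cs.simple j * w⁻¹, -1) := by
  obtain ⟨ω', hlen, hprod⟩ := cs.exists_reduced_word (w * cs.simple j)
  set ω := ω'.concat j with hω
  have hπ : cs.wordProd ω = w := by
    rw [hω, cs.wordProd_concat, ← hprod, cs.simple_mul_simple_cancel_right]
  have hred : cs.IsReduced ω := by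
    show cs.length (cs.wordProd ω) = ω.length
    rw [hπ, hω, List.length_concat, ← (hlen : cs.length (cs.wordProd ω') = ω'.length), ← hprod]
    have := cs.length_mul_simple w j
    omega
  have hmem : cs.simple j ∈ cs.rightInvSeq ω := by
    rw [hω, cs.rightInvSeq_concat]
    simp
  have hcount : List.count (cs.simple j) (cs.rightInvSeq ω) = 1 :=
    List.count_eq_one_of_mem hred.nodup_rightInvSeq hmem
  have happ := pRep_apply cs ω (cs.simple j) 1
  rw [hπ, hcount] at happ
  simpa using happ

lemma pRep_of_not_rightDescent (cs : CoxeterSystem M W) (w : W) (j : B)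
    (h : ¬ cs.length (w * cs.simple j) < cs.length w) :
    pRep cs w (cs.simple j, 1) = (w * cs.simple j * w⁻¹, 1) := by
  obtain ⟨ω, hlen, hprod⟩ := cs.exists_reduced_word w
  have hred : cs.IsReduced ω := by
    show cs.length (cs.wordProd ω) = ω.length
    rw [← hprod]
    rw [hprod]; exact hlen
  have hcount : Even (List.count (cs.simple j) (cs.rightInvSeq ω)) := by
    by_contra hodd
    have hpos : 0 < List.count (cs.simple j) (cs.rightInvSeq ω) :=
      Nat.pos_of_ne_zero (fun h0 => hodd (h0 ▸ Even.zero))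
    have hmem : cs.simple j ∈ cs.rightInvSeq ω := List.count_pos_iff.mp hpos
    have hinv := cs.isRightInversion_of_mem_rightInvSeq hred hmem
    rw [← hprod] at hinv
    exact h hinv.2
  have happ := pRep_apply cs ω (cs.simple j) 1
  rw [← hprod, hcount.neg_one_pow] at happ
  simpa using happ

lemma keyL (cs : CoxeterSystem M W) (i j : B) (u : W)
    (h1 : cs.length (cs.simple i * u) < cs.length u)
    (h2 : cs.length (u * cs.simple j) < cs.length u)
    (h3 : cs.simple i * u ≠ u * cs.simple j) :
    cs.length (cs.simple i * u * cs.simple j) + 2 = cs.length u := by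
  have hd1 : cs.length (cs.simple i * u) + 1 = cs.length u := by
    have := cs.length_simple_mul u i
    omega
  rcases cs.length_mul_simple (cs.simple i * u) j with hplus | hminus
  · exfalso
    have hnd : ¬ cs.length ((cs.simple i * u) * cs.simple j) < cs.length (cs.simple i * u) := by
      omega
    have hA := pRep_of_not_rightDescent cs (cs.simple i * u) j hnd
    have hB := pRep_of_rightDescent cs u j h2
    have hu : cs.simple i * (cs.simple i * u) = u := cs.simple_mul_simple_cancel_left i
    have hsplit : pRep cs u (cs.simple j, 1) =
        pRep cs (cs.simple i) (pRep cs (cs.simple i * u) (cs.simple j, 1)) := by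
      rw [← Equiv.Perm.mul_apply, ← map_mul, hu]
    rw [hB, hA, pRep_simple, sigmaPerm_apply] at hsplit
    by_cases hX : cs.simple i * u * cs.simple j * (cs.simple i * u)⁻¹ = cs.simple i
    · apply h3
      have heq : cs.simple i * u * cs.simple j = u := by
        calc cs.simple i * u * cs.simple j
            = (cs.simple i * u * cs.simple j * (cs.simple i * u)⁻¹) * (cs.simple i * u) := by
              group
          _ = cs.simple i * (cs.simple i * u) := by rw [hX]
          _ = u := hu
      calc cs.simple i * u = cs.simple i * u * cs.simple j * cs.simple j := by
            rw [cs.simple_mul_simple_cancel_right]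
        _ = u * cs.simple j := by rw [heq]
    · rw [if_neg hX] at hsplit
      have := congrArg Prod.snd hsplit
      simp at this
  · omega

section Counting

variable (cs : CoxeterSystem M W) (i j : B)

local notation "Gam" => fun w : W =>
  cs.length (cs.simple i * w * cs.simple j) + 2 = cs.length w

lemma gamma_left {w : W} (hw : cs.length (cs.simple i * w * cs.simple j) + 2 = cs.length w) :
    cs.length (cs.simple i * w) + 1 = cs.length w := by
  have d1 := cs.length_mul_simple (cs.simple i * w) j
  have d2 := cs.length_simple_mul w i
  omega

lemma gamma_right {w : W} (hw : cs.length (cs.simple i * w * cs.simple j) + 2 = cs.length w) :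
    cs.length (w * cs.simple j) + 1 = cs.length w := by
  have e : cs.simple i * (w * cs.simple j) = cs.simple i * w * cs.simple j :=
    (mul_assoc _ _ _).symm
  have d1 := cs.length_simple_mul (w * cs.simple j) i
  rw [e] at d1
  have d2 := cs.length_mul_simple w j
  omega

lemma gamma_ne {w : W} (hw : cs.length (cs.simple i * w * cs.simple j) + 2 = cs.length w) :
    cs.simple i * w ≠ w * cs.simple j := by
  intro h
  have e : cs.simple i * w * cs.simple j = w := by
    rw [h, cs.simple_mul_simple_cancel_right]
  rw [e] at hw
  omega

lemma notG_left {w : W} (hw : cs.length (cs.simple i * w * cs.simple j) + 2 = cs.length w) :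
    ¬ (cs.length (cs.simple i * (cs.simple i * w) * cs.simple j) + 2
        = cs.length (cs.simple i * w)) := by
  have e : cs.simple i * (cs.simple i * w) * cs.simple j = w * cs.simple j := by
    rw [cs.simple_mul_simple_cancel_left]
  rw [e]
  have h1 := gamma_left cs i j hw
  have h2 := gamma_right cs i j hw
  omega

lemma notG_right {w : W} (hw : cs.length (cs.simple i * w * cs.simple j) + 2 = cs.length w) :
    ¬ (cs.length (cs.simple i * (w * cs.simple j) * cs.simple j) + 2
        = cs.length (w * cs.simple j)) := by
  have e : cs.simple i * (w * cs.simple j) * cs.simple j = cs.simple i * w := by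
    rw [← mul_assoc, cs.simple_mul_simple_cancel_right]
  rw [e]
  have h1 := gamma_left cs i j hw
  have h2 := gamma_right cs i j hw
  omega

lemma notG_both {w : W} (hw : cs.length (cs.simple i * w * cs.simple j) + 2 = cs.length w) :
    ¬ (cs.length (cs.simple i * (cs.simple i * w * cs.simple j) * cs.simple j) + 2
        = cs.length (cs.simple i * w * cs.simple j)) := by
  have e : cs.simple i * (cs.simple i * w * cs.simple j) * cs.simple j = w := by
    rw [← mul_assoc, ← mul_assoc, cs.simple_mul_simple_self, one_mul,
      cs.simple_mul_simple_cancel_right]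
  rw [e]
  omega

lemma orbit_eq1 (x y : W) (h : x = cs.simple i * y) : y = cs.simple i * x := by
  rw [h, cs.simple_mul_simple_cancel_left]

lemma orbit_eq2 (x y : W) (h : x = y * cs.simple j) : y = x * cs.simple j := by
  rw [h, cs.simple_mul_simple_cancel_right]

lemma quad_not_comm (a b : Bool) (w : W)
    (hw : cs.length (cs.simple i * w * cs.simple j) + 2 = cs.length w) :
    ¬ (cs.simple i * ((cond a (cs.simple i) 1) * w * (cond b (cs.simple j) 1))
        = ((cond a (cs.simple i) 1) * w * (cond b (cs.simple j) 1)) * cs.simple j) := by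
  cases a <;> cases b <;> simp only [cond_true, cond_false, one_mul, mul_one]
  · exact gamma_ne cs i j hw
  · rw [cs.simple_mul_simple_cancel_right]
    intro h
    exact gamma_ne cs i j hw (orbit_eq1 cs i w (w * cs.simple j) h.symm).symm
  · rw [cs.simple_mul_simple_cancel_left]
    intro h
    exact gamma_ne cs i j hw (orbit_eq2 cs j w (cs.simple i * w) h)
  · rw [cs.simple_mul_simple_cancel_right, ← mul_assoc, ← mul_assoc,
      cs.simple_mul_simple_self, one_mul]
    intro h
    exact gamma_ne cs i j hw h.symm


end Counting

/-- The counting identity underlying the computation of `|Γ(W)|`: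
`4 · |{w : ℓ(sᵢ w sⱼ) = ℓ(w) − 2}| + |{w : sᵢ w = w sⱼ}| = |W|`. -/
theorem four_mul_card_gamma_add_card_comm [Finite W] (cs : CoxeterSystem M W) (i j : B) :
    4 * Nat.card {w : W // cs.length (cs.simple i * w * cs.simple j) + 2 = cs.length w}
        + Nat.card {w : W // cs.simple i * w = w * cs.simple j}
      = Nat.card W := by
  classical
  let F : (Bool × Bool) × {w : W // cs.length (cs.simple i * w * cs.simple j) + 2 = cs.length w} →
      {w : W // ¬ (cs.simple i * w = w * cs.simple j)} :=
    fun x => ⟨(cond x.1.1 (cs.simple i) 1) * x.2.1 * (cond x.1.2 (cs.simple j) 1),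
      quad_not_comm cs i j x.1.1 x.1.2 x.2.1 x.2.2⟩
  have hinj : Function.Injective F := by
    rintro ⟨⟨a, b⟩, ⟨w, hw⟩⟩ ⟨⟨a', b'⟩, ⟨w', hw'⟩⟩ h
    have hv : (cond a (cs.simple i) 1) * w * (cond b (cs.simple j) 1)
        = (cond a' (cs.simple i) 1) * w' * (cond b' (cs.simple j) 1) := congrArg Subtype.val h
    clear h
    cases a <;> cases b <;> cases a' <;> cases b' <;>
      simp only [cond_true, cond_false, one_mul, mul_one] at hv
    -- (f,f,f,f) : w = w'
    · subst hv; rfl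
    -- (f,f,f,t) : w = w' * s_j
    · exfalso
      have e := orbit_eq2 cs j w w' hv
      subst e
      exact notG_right cs i j hw hw'
    -- (f,f,t,f) : w = s_i * w'
    · exfalso
      have e := orbit_eq1 cs i w w' hv
      subst e
      exact notG_left cs i j hw hw'
    -- (f,f,t,t) : w = s_i * w' * s_j
    · exfalso
      have e1 := orbit_eq2 cs j w (cs.simple i * w') hv
      have e2 := orbit_eq1 cs i (w * cs.simple j) w' e1.symm
      rw [← mul_assoc] at e2
      subst e2
      exact notG_both cs i j hw hw'
    -- (f,t,f,f) : w * s_j = w'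
    · exfalso
      have e := hv.symm
      subst e
      exact notG_right cs i j hw hw'
    -- (f,t,f,t) : w * s_j = w' * s_j
    · have e := mul_right_cancel hv
      subst e; rfl
    -- (f,t,t,f) : w * s_j = s_i * w'
    · exfalso
      have e := orbit_eq1 cs i (w * cs.simple j) w' hv
      rw [← mul_assoc] at e
      subst e
      exact notG_both cs i j hw hw'
    -- (f,t,t,t) : w * s_j = s_i * w' * s_j
    · exfalso
      have e1 : w = cs.simple i * w' := mul_right_cancel hv
      have e2 := orbit_eq1 cs i w w' e1
      subst e2
      exact notG_left cs i j hw hw'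
    -- (t,f,f,f) : s_i * w = w'
    · exfalso
      have e := hv.symm
      subst e
      exact notG_left cs i j hw hw'
    -- (t,f,f,t) : s_i * w = w' * s_j
    · exfalso
      have e := orbit_eq2 cs j (cs.simple i * w) w' hv
      subst e
      exact notG_both cs i j hw hw'
    -- (t,f,t,f) : s_i * w = s_i * w'
    · have e := mul_left_cancel hv
      subst e; rfl
    -- (t,f,t,t) : s_i * w = s_i * w' * s_j
    · exfalso
      rw [mul_assoc] at hv
      have e1 : w = w' * cs.simple j := mul_left_cancel hv
      have e2 := orbit_eq2 cs j w w' e1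
      subst e2
      exact notG_right cs i j hw hw'
    -- (t,t,f,f) : s_i * w * s_j = w'
    · exfalso
      have e := hv.symm
      subst e
      exact notG_both cs i j hw hw'
    -- (t,t,f,t) : s_i * w * s_j = w' * s_j
    · exfalso
      have e : w' = cs.simple i * w := (mul_right_cancel hv).symm
      subst e
      exact notG_left cs i j hw hw'
    -- (t,t,t,f) : s_i * w * s_j = s_i * w'
    · exfalso
      rw [mul_assoc] at hv
      have e : w' = w * cs.simple j := (mul_left_cancel hv).symm
      subst e
      exact notG_right cs i j hw hw'
    -- (t,t,t,t) : s_i * w * s_j = s_i * w' * s_j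
    · rw [mul_assoc, mul_assoc] at hv
      have e := mul_right_cancel (mul_left_cancel hv : w * cs.simple j = w' * cs.simple j)
      subst e; rfl
  have hsurj : Function.Surjective F := by
    rintro ⟨x, hx⟩
    have e1 : cs.simple i * (cs.simple i * x) = x := cs.simple_mul_simple_cancel_left i
    have e2 : cs.simple i * (x * cs.simple j) = cs.simple i * x * cs.simple j :=
      (mul_assoc _ _ _).symm
    have e3 : x * cs.simple j * cs.simple j = x := cs.simple_mul_simple_cancel_right j
    have d1 := cs.length_mul_simple (cs.simple i * x) j
    have d2 := cs.length_simple_mul (x * cs.simple j) i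
    rw [e2] at d2
    rcases cs.length_simple_mul x i with hi | hi <;> rcases cs.length_mul_simple x j with hj | hj
    -- (+,+)
    · have hval : cs.length (cs.simple i * x * cs.simple j) = cs.length x + 2 := by
        by_cases hmid : cs.length (cs.simple i * x * cs.simple j) = cs.length x
        · exfalso
          have h1u : cs.length (cs.simple i * (cs.simple i * x)) < cs.length (cs.simple i * x) := by
            rw [e1]; omega
          have h2u : cs.length ((cs.simple i * x) * cs.simple j) < cs.length (cs.simple i * x) := by
            omega
          have h3u : cs.simple i * (cs.simple i * x) ≠ (cs.simple i * x) * cs.simple j := by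
            rw [e1]
            intro h
            exact hx (orbit_eq2 cs j x (cs.simple i * x) h)
          have hcon := keyL cs i j (cs.simple i * x) h1u h2u h3u
          have e4 : cs.simple i * (cs.simple i * x) * cs.simple j = x * cs.simple j := by
            rw [cs.simple_mul_simple_cancel_left]
          rw [e4] at hcon
          omega
        · omega
      have e5 : cs.simple i * (cs.simple i * x * cs.simple j) * cs.simple j = x := by
        rw [← mul_assoc, ← mul_assoc, cs.simple_mul_simple_self, one_mul,
          cs.simple_mul_simple_cancel_right]
      refine ⟨⟨(true, true), ⟨cs.simple i * x * cs.simple j, ?_⟩⟩, Subtype.ext ?_⟩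
      · rw [e5]; omega
      · show cs.simple i * (cs.simple i * x * cs.simple j) * cs.simple j = x
        exact e5
    -- (+,-) : hi : ℓ(s_i x) = ℓ x + 1, hj : ℓ(x s_j) + 1 = ℓ x
    · have hval : cs.length (cs.simple i * x * cs.simple j) = cs.length x := by omega
      have h1u : cs.length (cs.simple i * (cs.simple i * x)) < cs.length (cs.simple i * x) := by
        rw [e1]; omega
      have h2u : cs.length ((cs.simple i * x) * cs.simple j) < cs.length (cs.simple i * x) := by
        omega
      have h3u : cs.simple i * (cs.simple i * x) ≠ (cs.simple i * x) * cs.simple j := by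
        rw [e1]
        intro h
        exact hx (orbit_eq2 cs j x (cs.simple i * x) h)
      refine ⟨⟨(true, false), ⟨cs.simple i * x, keyL cs i j (cs.simple i * x) h1u h2u h3u⟩⟩,
        Subtype.ext ?_⟩
      show cs.simple i * (cs.simple i * x) * 1 = x
      rw [mul_one, e1]
    -- (-,+) : hi : ℓ(s_i x) + 1 = ℓ x, hj : ℓ(x s_j) = ℓ x + 1
    · have hval : cs.length (cs.simple i * x * cs.simple j) = cs.length x := by omega
      have h1u : cs.length (cs.simple i * (x * cs.simple j)) < cs.length (x * cs.simple j) := by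
        rw [e2]; omega
      have h2u : cs.length ((x * cs.simple j) * cs.simple j) < cs.length (x * cs.simple j) := by
        rw [e3]; omega
      have h3u : cs.simple i * (x * cs.simple j) ≠ (x * cs.simple j) * cs.simple j := by
        rw [e3]
        intro h
        exact hx (orbit_eq1 cs i x (x * cs.simple j) h.symm).symm
      refine ⟨⟨(false, true), ⟨x * cs.simple j, keyL cs i j (x * cs.simple j) h1u h2u h3u⟩⟩,
        Subtype.ext ?_⟩
      show 1 * (x * cs.simple j) * cs.simple j = x
      rw [one_mul, e3]
    -- (-,-)
    · refine ⟨⟨(false, false), ⟨x, keyL cs i j x (by omega) (by omega) hx⟩⟩, Subtype.ext ?_⟩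
      show 1 * x * 1 = x
      rw [one_mul, mul_one]
  have hcard1 : Nat.card ((Bool × Bool) ×
      {w : W // cs.length (cs.simple i * w * cs.simple j) + 2 = cs.length w})
      = Nat.card {w : W // ¬ (cs.simple i * w = w * cs.simple j)} :=
    Nat.card_eq_of_bijective F ⟨hinj, hsurj⟩
  rw [Nat.card_prod] at hcard1
  have hbb : Nat.card (Bool × Bool) = 4 := by
    simp [Nat.card_eq_fintype_card]
  rw [hbb] at hcard1
  have hsplit : Nat.card {w : W // ¬ (cs.simple i * w = w * cs.simple j)}
      + Nat.card {w : W // cs.simple i * w = w * cs.simple j} = Nat.card W := by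
    rw [← Nat.card_sum]
    exact Nat.card_congr ((Equiv.sumComm _ _).trans (Equiv.sumCompl _))
  omega

end NilpotencyIndices
end

section
/- The relations →_L and →_R are partial orders on Γ(W): each is reflexive and transitive, and each is antisymmetric (x →_L y and y →_L x imply x = y, and likewise for →_R). -/
open CoxeterSystem

namespace NilpotencyIndices

variable {B : Type*} {W : Type*} [Group W] {M : CoxeterMatrix B}

namespace GeomRep

/-- The cosine matrix. -/
noncomputable def K (M : CoxeterMatrix B) (i j : B) : ℝ := - Real.cos (Real.pi / (M i j : ℝ))

/-- The family of linear functionals. -/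
noncomputable def L (M : CoxeterMatrix B) (i : B) : (B →₀ ℝ) →ₗ[ℝ] ℝ :=
  Finsupp.linearCombination ℝ (fun j => K M i j)

/-- The geometric reflection. -/
noncomputable def S (M : CoxeterMatrix B) (i : B) : Module.End ℝ (B →₀ ℝ) :=
  LinearMap.id - (Finsupp.lsingle i).comp ((2 : ℝ) • L M i)

lemma K_diag (M : CoxeterMatrix B) (i : B) : K M i i = 1 := by
  unfold K
  rw [M.diagonal i]
  norm_num

lemma K_symm (M : CoxeterMatrix B) (i j : B) : K M i j = K M j i := by
  unfold K
  rw [M.symmetric i j]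

lemma L_single (M : CoxeterMatrix B) (i j : B) (r : ℝ) :
    L M i (Finsupp.single j r) = r * K M i j := by
  unfold L
  rw [Finsupp.linearCombination_single, smul_eq_mul]

lemma S_apply (M : CoxeterMatrix B) (i : B) (x : B →₀ ℝ) :
    S M i x = x - Finsupp.single i (2 * L M i x) := by
  simp [S, LinearMap.sub_apply, LinearMap.comp_apply, LinearMap.smul_apply]

lemma S_invol (M : CoxeterMatrix B) (i : B) : S M i * S M i = 1 := by
  apply LinearMap.ext
  intro x
  rw [Module.End.mul_apply, S_apply, S_apply, map_sub, L_single, K_diag, mul_one]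
  rw [Module.End.one_apply]
  rw [show 2 * ((L M i) x - 2 * (L M i) x) = -(2 * (L M i) x) by ring]
  rw [Finsupp.single_neg]
  abel

section Pair

variable (M : CoxeterMatrix B) (i j : B)

/-- Sum of two single coordinates. -/
noncomputable def P2 (a b : ℝ) : B →₀ ℝ := Finsupp.single i a + Finsupp.single j b

lemma L_P2 (a b : ℝ) : L M i (P2 i j a b) = a + b * K M i j := by
  rw [P2, map_add, L_single, L_single, K_diag, mul_one]

lemma L_P2' (a b : ℝ) : L M j (P2 i j a b) = b + a * K M j i := by
  rw [P2, map_add, L_single, L_single, K_diag, mul_one]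
  ring

lemma S_P2 (a b : ℝ) :
    S M i (P2 i j a b) = P2 i j (-(a + 2 * (b * K M i j))) b := by
  rw [S_apply, L_P2, P2, P2]
  rw [show -(a + 2 * (b * K M i j)) = a - 2 * (a + b * K M i j) by ring]
  rw [Finsupp.single_sub]
  abel

lemma S_P2' (a b : ℝ) :
    S M j (P2 i j a b) = P2 i j a (-(b + 2 * (a * K M j i))) := by
  rw [S_apply, L_P2', P2, P2]
  rw [show -(b + 2 * (a * K M j i)) = b - 2 * (b + a * K M j i) by ring]
  rw [Finsupp.single_sub]
  abel

theorem pair_relation (hij : i ≠ j) (h0 : M i j ≠ 0) :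
    (S M i * S M j) ^ (M i j) = 1 := by
  have h1 : M i j ≠ 1 := M.off_diagonal i j hij
  have hm2 : 2 ≤ M i j := by omega
  have hmR : (1 : ℝ) < (M i j : ℝ) := by exact_mod_cast hm2.trans_lt' one_lt_two
  set m := M i j with hmdef
  set θ : ℝ := Real.pi / m with hθdef
  have hθ0 : 0 < θ := div_pos Real.pi_pos (by linarith)
  have hθπ : θ < Real.pi := div_lt_self Real.pi_pos hmR
  set c : ℝ := Real.cos θ with hcdef
  set sn : ℝ := Real.sin θ with hsdef
  have hsn : 0 < sn := Real.sin_pos_of_pos_of_lt_pi hθ0 hθπ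
  have hs2 : sn ^ 2 = 1 - c ^ 2 := Real.sin_sq θ
  have hKij : K M i j = -c := by rw [K, hcdef, hθdef, hmdef]
  have hKji : K M j i = -c := by rw [← K_symm, hKij]
  -- the complex scalar of rotation
  set e : ℂ := Complex.exp ((-(2 * θ) : ℝ) * Complex.I) with hedef
  have he_re : e.re = Real.cos (2 * θ) := by
    rw [hedef, Complex.exp_ofReal_mul_I_re, Real.cos_neg]
  have he_im : e.im = -Real.sin (2 * θ) := by
    rw [hedef, Complex.exp_ofReal_mul_I_im, Real.sin_neg]
  have hem : e ^ m = 1 := by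
    rw [hedef, ← Complex.exp_nat_mul]
    have hmne : (m : ℂ) ≠ 0 := Nat.cast_ne_zero.mpr h0
    have harg : (m : ℂ) * (((-(2 * θ) : ℝ) : ℂ) * Complex.I)
        = -(2 * (Real.pi : ℂ) * Complex.I) := by
      rw [hθdef]
      push_cast
      field_simp
    rw [harg, Complex.exp_neg, Complex.exp_two_pi_mul_I, inv_one]
  -- coordinates of the plane, via ℂ
  set u : ℂ → ℝ := fun z => z.re - c * z.im / sn with hudef
  set v : ℂ → ℝ := fun z => -z.im / sn with hvdef
  set ψ : ℂ → (B →₀ ℝ) := fun z => P2 i j (u z) (v z) with hψdef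
  have hSψ : ∀ z : ℂ, (S M i * S M j) (ψ z) = ψ (e * z) := by
    intro z
    rw [Module.End.mul_apply, hψdef]
    simp only
    rw [S_P2' M i j, S_P2 M i j, hKij, hKji]
    have hv : v (e * z) = -(v z + 2 * (u z * -c)) := by
      rw [hvdef, hudef]
      simp only [Complex.mul_im, he_re, he_im, Real.sin_two_mul, Real.cos_two_mul]
      field_simp
      ring
    have hu : u (e * z) = -(u z + 2 * (v (e * z) * -c)) := by
      rw [hv, hudef, hvdef]
      simp only [Complex.mul_re, Complex.mul_im, he_re, he_im,
        Real.sin_two_mul, Real.cos_two_mul]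
      field_simp
      linear_combination (2 * c * z.im) * hs2
    rw [← hv, ← hu]
  have hSψpow : ∀ (k : ℕ) (z : ℂ), ((S M i * S M j) ^ k) (ψ z) = ψ (e ^ k * z) := by
    intro k
    induction k with
    | zero => intro z; simp
    | succ k ih =>
      intro z
      rw [pow_succ, Module.End.mul_apply, hSψ, ih, ← mul_assoc, ← pow_succ]
  have hfix : ∀ x : B →₀ ℝ, L M i x = 0 → L M j x = 0 → (S M i * S M j) x = x := by
    intro x hi hj
    rw [Module.End.mul_apply, S_apply M j x, hj, mul_zero, Finsupp.single_zero, sub_zero,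
      S_apply M i x, hi, mul_zero, Finsupp.single_zero, sub_zero]
  have hfixpow : ∀ (k : ℕ) (x : B →₀ ℝ), L M i x = 0 → L M j x = 0 →
      ((S M i * S M j) ^ k) x = x := by
    intro k
    induction k with
    | zero => intro x _ _; simp
    | succ k ih =>
      intro x hi hj
      rw [pow_succ, Module.End.mul_apply, hfix x hi hj, ih x hi hj]
  have hdec : ∀ x : B →₀ ℝ, ∃ z : ℂ, L M i (x - ψ z) = 0 ∧ L M j (x - ψ z) = 0 := by
    intro x
    have h1c : (1 : ℝ) - c ^ 2 ≠ 0 := by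
      rw [← hs2]; positivity
    set A := L M i x with hA
    set C := L M j x with hC
    set a : ℝ := (A + c * C) / (1 - c ^ 2) with ha
    set b : ℝ := (C + c * A) / (1 - c ^ 2) with hb
    have hsne : sn ≠ 0 := ne_of_gt hsn
    refine ⟨⟨a - c * b, -(sn * b)⟩, ?_, ?_⟩
    · rw [map_sub, show ψ ⟨a - c * b, -(sn * b)⟩ = P2 i j a b by
        rw [hψdef]
        have huz : u ⟨a - c * b, -(sn * b)⟩ = a := by
          rw [hudef]
          show a - c * b - c * -(sn * b) / sn = a
          field_simp
          ring
        have hvz : v ⟨a - c * b, -(sn * b)⟩ = b := by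
          rw [hvdef]
          show - -(sn * b) / sn = b
          field_simp
        calc ψ ⟨a - c * b, -(sn * b)⟩
            = P2 i j (u ⟨a - c * b, -(sn * b)⟩) (v ⟨a - c * b, -(sn * b)⟩) := by rw [hψdef]
          _ = P2 i j a b := by rw [huz, hvz]]
      rw [L_P2, hKij, ← hA, ha, hb]
      field_simp
      ring
    · rw [map_sub, show ψ ⟨a - c * b, -(sn * b)⟩ = P2 i j a b by
        rw [hψdef]
        have huz : u ⟨a - c * b, -(sn * b)⟩ = a := by
          rw [hudef]
          show a - c * b - c * -(sn * b) / sn = a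
          field_simp
          ring
        have hvz : v ⟨a - c * b, -(sn * b)⟩ = b := by
          rw [hvdef]
          show - -(sn * b) / sn = b
          field_simp
        calc ψ ⟨a - c * b, -(sn * b)⟩
            = P2 i j (u ⟨a - c * b, -(sn * b)⟩) (v ⟨a - c * b, -(sn * b)⟩) := by rw [hψdef]
          _ = P2 i j a b := by rw [huz, hvz]]
      rw [L_P2', hKji, ← hC, ha, hb]
      field_simp
      ring
  apply LinearMap.ext
  intro x
  obtain ⟨z, hz1, hz2⟩ := hdec x
  have hxe : x = ψ z + (x - ψ z) := by abel
  rw [Module.End.one_apply]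
  nth_rewrite 1 [hxe]
  rw [map_add, hSψpow m z, hem, one_mul, hfixpow m _ hz1 hz2]
  abel

end Pair

theorem liftable (M : CoxeterMatrix B) : M.IsLiftable (S M) := by
  intro i j
  by_cases hij : i = j
  · subst hij
    rw [M.diagonal i, pow_one, S_invol]
  by_cases h0 : M i j = 0
  · rw [h0, pow_zero]
  exact pair_relation M i j hij h0

theorem simple_injective (cs : CoxeterSystem M W) : Function.Injective cs.simple := by
  intro i j hsij
  by_contra hne
  have h : S M i = S M j := by
    have h := congrArg (cs.lift ⟨S M, liftable M⟩) hsij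
    rwa [cs.lift_apply_simple, cs.lift_apply_simple] at h
  have h2 := congrArg (fun f : Module.End ℝ (B →₀ ℝ) => f (Finsupp.single i 1) i) h
  simp only [S_apply, L_single, K_diag, Finsupp.sub_apply, Finsupp.single_eq_same] at h2
  rw [Finsupp.single_eq_of_ne' (fun hji : j = i => hne hji.symm)] at h2
  norm_num at h2

end GeomRep


namespace SignRep

local prefix:100 "s" => CoxeterSystem.simple

open Classical in
/-- The underlying function of the sign permutation for generator `i`. -/
noncomputable def F (cs : CoxeterSystem M W) (i : B) : W × ℤˣ → W × ℤˣ :=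
  fun p => (cs.simple i * p.1 * cs.simple i, if p.1 = cs.simple i then -p.2 else p.2)

lemma conj_eq_iff {G : Type*} [Group G] (a t x : G) :
    a * t * a⁻¹ = x ↔ t = a⁻¹ * x * a := by
  constructor
  · rintro rfl; group
  · rintro rfl; group

lemma simple_conj_eq_iff (cs : CoxeterSystem M W) (k : B) (t x : W) :
    cs.simple k * t * cs.simple k = x ↔ t = cs.simple k * x * cs.simple k := by
  have := conj_eq_iff (cs.simple k) t x
  rw [cs.inv_simple] at this
  exact this

lemma F_involutive (cs : CoxeterSystem M W) (i : B) : Function.Involutive (F cs i) := by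
  intro p
  have h1 : ∀ t : W, cs.simple i * (cs.simple i * t * cs.simple i) * cs.simple i = t := by
    intro t
    have : cs.simple i * (cs.simple i * t * cs.simple i) * cs.simple i
        = (cs.simple i * cs.simple i) * t * (cs.simple i * cs.simple i) := by group
    rw [this, cs.simple_mul_simple_self i, one_mul, mul_one]
  have hcond : ∀ t : W, (cs.simple i * t * cs.simple i = cs.simple i) ↔ t = cs.simple i := by
    intro t
    rw [simple_conj_eq_iff, cs.simple_mul_simple_cancel_right]
  by_cases hp : p.1 = cs.simple i
  · simp only [F, hp, if_pos, h1, hcond]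
    exact Prod.ext hp.symm (by simp)
  · simp only [F, h1, hcond]
    rw [if_neg (by simpa [hcond] using hp)]
    exact Prod.ext rfl (if_neg (by simpa [hcond] using hp))

/-- The sign permutation. -/
noncomputable def P (cs : CoxeterSystem M W) (i : B) : Equiv.Perm (W × ℤˣ) :=
  Function.Involutive.toPerm (F cs i) (F_involutive cs i)

lemma P_apply (cs : CoxeterSystem M W) (i : B) (x : W × ℤˣ) : P cs i x = F cs i x := rfl

open Classical in
/-- Sign change character for the pair `(i, j)`. -/
noncomputable def chi (cs : CoxeterSystem M W) (i j : B) (t : W) : ℤˣ :=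
  (if t = cs.simple j then -1 else 1) *
    (if t = cs.simple j * cs.simple i * cs.simple j then -1 else 1)

lemma mul_P_apply (cs : CoxeterSystem M W) (i j : B) (x : W × ℤˣ) :
    (P cs i * P cs j) x =
      ((cs.simple i * cs.simple j) * x.1 * (cs.simple i * cs.simple j)⁻¹,
        x.2 * chi cs i j x.1) := by
  rw [Equiv.Perm.mul_apply, P_apply, P_apply]
  simp only [F, chi]
  simp only [Prod.mk.injEq]
  constructor
  · rw [mul_inv_rev, cs.inv_simple, cs.inv_simple]
    group
  · have h2' := simple_conj_eq_iff cs j x.1 (cs.simple i)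
    by_cases h2 : x.1 = cs.simple j * cs.simple i * cs.simple j
    · simp only [h2'.mpr h2, if_true]
      by_cases h1 : x.1 = cs.simple j
      · simp only [if_pos h1, if_pos h2]; simp
      · simp only [if_neg h1, if_pos h2]; simp
    · simp only [h2', h2, if_false]
      by_cases h1 : x.1 = cs.simple j
      · simp only [if_pos h1, if_neg h2]; simp
      · simp only [if_neg h1, if_neg h2]; simp

lemma pow_mul_P_apply (cs : CoxeterSystem M W) (i j : B) (n : ℕ) (x : W × ℤˣ) :
    ((P cs i * P cs j) ^ n) x =
      ((cs.simple i * cs.simple j) ^ n * x.1 * ((cs.simple i * cs.simple j) ^ n)⁻¹,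
        x.2 * ∏ k ∈ Finset.range n,
          chi cs i j ((cs.simple i * cs.simple j) ^ k * x.1 * ((cs.simple i * cs.simple j) ^ k)⁻¹)) := by
  induction n generalizing x with
  | zero => simp
  | succ n ih =>
    rw [pow_succ, Equiv.Perm.mul_apply, mul_P_apply, ih]
    set p := cs.simple i * cs.simple j with hp
    simp only [Prod.mk.injEq]
    constructor
    · rw [pow_succ]
      group
    · rw [Finset.prod_range_succ']
      have : ∀ k : ℕ, p ^ k * (p * x.1 * p⁻¹) * (p ^ k)⁻¹ = p ^ (k + 1) * x.1 * (p ^ (k + 1))⁻¹ := by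
        intro k; rw [pow_succ']; group
      rw [Finset.prod_congr rfl fun k _ => congrArg (chi cs i j) (this k)]
      simp [mul_assoc, mul_comm, pow_zero]

lemma inv_mul_simple (cs : CoxeterSystem M W) (i j : B) :
    (cs.simple i * cs.simple j)⁻¹ * cs.simple j = cs.simple j * (cs.simple i * cs.simple j) := by
  rw [mul_inv_rev, cs.inv_simple, cs.inv_simple, mul_assoc]

lemma inv_pow_mul_simple (cs : CoxeterSystem M W) (i j : B) (r : ℕ) :
    ((cs.simple i * cs.simple j) ^ r)⁻¹ * cs.simple j
      = cs.simple j * (cs.simple i * cs.simple j) ^ r := by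
  induction r with
  | zero => simp
  | succ r ih =>
    rw [pow_succ, mul_inv_rev, mul_assoc, ih, ← mul_assoc, inv_mul_simple, mul_assoc, ← pow_succ', pow_succ]

lemma c_formula (cs : CoxeterSystem M W) (i j : B) (k : ℕ) :
    ((cs.simple i * cs.simple j) ^ k)⁻¹ * cs.simple j * (cs.simple i * cs.simple j) ^ k
      = cs.simple j * (cs.simple i * cs.simple j) ^ (2 * k) := by
  rw [inv_pow_mul_simple, mul_assoc, ← pow_add, two_mul]

lemma d_formula (cs : CoxeterSystem M W) (i j : B) (k : ℕ) :
    ((cs.simple i * cs.simple j) ^ k)⁻¹ * (cs.simple j * cs.simple i * cs.simple j)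
        * (cs.simple i * cs.simple j) ^ k
      = cs.simple j * (cs.simple i * cs.simple j) ^ (2 * k + 1) := by
  have h : cs.simple j * cs.simple i * cs.simple j
      = (cs.simple i * cs.simple j)⁻¹ * cs.simple j := by
    rw [mul_inv_rev, cs.inv_simple, cs.inv_simple]
  rw [h, ← mul_assoc, ← mul_inv_rev, ← pow_succ', inv_pow_mul_simple, mul_assoc, ← pow_add,
    show k + 1 + k = 2 * k + 1 from by omega]

open Classical in
lemma chi_conj (cs : CoxeterSystem M W) (i j : B) (t : W) (k : ℕ) :
    chi cs i j ((cs.simple i * cs.simple j) ^ k * t * ((cs.simple i * cs.simple j) ^ k)⁻¹)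
      = (if t = cs.simple j * (cs.simple i * cs.simple j) ^ (2 * k) then (-1 : ℤˣ) else 1) *
        (if t = cs.simple j * (cs.simple i * cs.simple j) ^ (2 * k + 1) then (-1 : ℤˣ) else 1) := by
  unfold chi
  congr 1
  · congr 1
    rw [eq_iff_iff]
    rw [conj_eq_iff, c_formula]
  · congr 1
    rw [eq_iff_iff]
    rw [conj_eq_iff, d_formula]

lemma prod_pair {G : Type*} [CommMonoid G] (f : ℕ → G) (n : ℕ) :
    ∏ k ∈ Finset.range n, (f (2 * k) * f (2 * k + 1)) = ∏ r ∈ Finset.range (2 * n), f r := by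
  induction n with
  | zero => simp
  | succ n ih =>
    rw [Finset.prod_range_succ, ih, show 2 * (n + 1) = (2 * n + 1) + 1 by omega,
      Finset.prod_range_succ, Finset.prod_range_succ, mul_assoc]

theorem liftable (cs : CoxeterSystem M W) : M.IsLiftable (P cs) := by
  classical
  intro i j
  by_cases h0 : M i j = 0
  · rw [h0, pow_zero]
  apply Equiv.ext
  intro x
  rw [pow_mul_P_apply]
  have hpm : (cs.simple i * cs.simple j) ^ M i j = 1 := cs.simple_mul_simple_pow i j
  have hS : (∏ k ∈ Finset.range (M i j),
      chi cs i j ((cs.simple i * cs.simple j) ^ k * x.1 * ((cs.simple i * cs.simple j) ^ k)⁻¹))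
      = 1 := by
    have e1 : ∀ k, chi cs i j ((cs.simple i * cs.simple j) ^ k * x.1
        * ((cs.simple i * cs.simple j) ^ k)⁻¹)
        = (fun r => if x.1 = cs.simple j * (cs.simple i * cs.simple j) ^ r then (-1 : ℤˣ) else 1)
            (2 * k)
          * (fun r => if x.1 = cs.simple j * (cs.simple i * cs.simple j) ^ r then (-1 : ℤˣ) else 1)
            (2 * k + 1) := fun k => chi_conj cs i j x.1 k
    rw [Finset.prod_congr rfl fun k _ => e1 k,
      prod_pair (fun r => if x.1 = cs.simple j * (cs.simple i * cs.simple j) ^ r then (-1 : ℤˣ)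
        else 1) (M i j), two_mul, Finset.prod_range_add]
    have e2 : ∀ r : ℕ, (cs.simple i * cs.simple j) ^ (M i j + r)
        = (cs.simple i * cs.simple j) ^ r := by
      intro r; rw [pow_add, hpm, one_mul]
    simp only [e2]
    exact Int.units_mul_self _
  rw [hpm, hS]
  simp

/-- The sign representation homomorphism. -/
noncomputable def Phi (cs : CoxeterSystem M W) : W →* Equiv.Perm (W × ℤˣ) :=
  cs.lift ⟨P cs, liftable cs⟩

lemma Phi_simple (cs : CoxeterSystem M W) (i : B) : Phi cs (cs.simple i) = P cs i :=
  cs.lift_apply_simple (liftable cs) i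

open Classical in
lemma Phi_wordProd (cs : CoxeterSystem M W) (ω : List B) (x : W × ℤˣ) :
    Phi cs (cs.wordProd ω) x
      = (cs.wordProd ω * x.1 * (cs.wordProd ω)⁻¹,
         x.2 * (-1 : ℤˣ) ^ (List.count x.1 (cs.rightInvSeq ω))) := by
  induction ω generalizing x with
  | nil => simp
  | cons i ω ih =>
    rw [cs.wordProd_cons, map_mul, Equiv.Perm.mul_apply, ih, Phi_simple, P_apply]
    simp only [F, Prod.mk.injEq]
    have hris : cs.rightInvSeq (i :: ω)
        = ((cs.wordProd ω)⁻¹ * cs.simple i * cs.wordProd ω) :: cs.rightInvSeq ω := rfl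
    constructor
    · rw [mul_inv_rev, cs.inv_simple]
      group
    · rw [hris, List.count_cons]
      simp only [beq_iff_eq]
      by_cases hc : cs.wordProd ω * x.1 * (cs.wordProd ω)⁻¹ = cs.simple i
      · rw [if_pos hc, if_pos ((conj_eq_iff _ _ _).mp hc).symm, pow_succ, ← mul_assoc,
          mul_neg_one]
      · rw [if_neg hc, if_neg (fun h => hc ((conj_eq_iff _ _ _).mpr h.symm)), add_zero]

/-- The sign cocycle. -/
noncomputable def eta (cs : CoxeterSystem M W) (w t : W) : ℤˣ := (Phi cs w (t, 1)).2

lemma Phi_apply (cs : CoxeterSystem M W) (w : W) (x : W × ℤˣ) :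
    Phi cs w x = (w * x.1 * w⁻¹, x.2 * eta cs w x.1) := by
  classical
  obtain ⟨ω, _, hw⟩ := cs.exists_reduced_word' w
  subst hw
  rw [Phi_wordProd, eta, Phi_wordProd]
  simp

lemma eta_mul (cs : CoxeterSystem M W) (w v t : W) :
    eta cs (w * v) t = eta cs v t * eta cs w (v * t * v⁻¹) := by
  unfold eta
  rw [map_mul, Equiv.Perm.mul_apply, Phi_apply, Phi_apply]
  simp [eta]

lemma eta_one (cs : CoxeterSystem M W) (t : W) : eta cs 1 t = 1 := by
  unfold eta
  simp

lemma eta_simple_self (cs : CoxeterSystem M W) (i : B) :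
    eta cs (cs.simple i) (cs.simple i) = -1 := by
  unfold eta
  rw [Phi_simple, P_apply]
  simp [F]

lemma eta_eq_one (cs : CoxeterSystem M W) {w t : W}
    (h : ¬ cs.length (w * t) < cs.length w) : eta cs w t = 1 := by
  classical
  obtain ⟨ω, hred, hw⟩ := cs.exists_reduced_word' w
  subst hw
  rw [eta, Phi_wordProd]
  have hmem : t ∉ cs.rightInvSeq ω := fun hmem =>
    h (cs.isRightInversion_of_mem_rightInvSeq hred hmem).2
  simp [List.count_eq_zero_of_not_mem hmem]

lemma eta_refl_self (cs : CoxeterSystem M W) {t : W} (ht : cs.IsReflection t) :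
    eta cs t t = -1 := by
  obtain ⟨u, i, rfl⟩ := ht
  set t := u * cs.simple i * u⁻¹ with hts
  have key0 : u⁻¹ * t * (u⁻¹)⁻¹ = cs.simple i := by rw [hts]; group
  have h1 : eta cs u⁻¹ t * eta cs u (cs.simple i) = 1 := by
    have := eta_mul cs u u⁻¹ t
    rw [mul_inv_cancel, eta_one, key0] at this
    exact this.symm
  have h2 : eta cs t t = eta cs u⁻¹ t * eta cs (u * cs.simple i) (cs.simple i) := by
    have h3 : t = (u * cs.simple i) * u⁻¹ := by rw [hts]
    nth_rewrite 1 [h3]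
    rw [eta_mul, key0]
  have h4 : eta cs (u * cs.simple i) (cs.simple i) = - eta cs u (cs.simple i) := by
    rw [eta_mul, eta_simple_self]
    have : cs.simple i * cs.simple i * (cs.simple i)⁻¹ = cs.simple i := by group
    rw [this, neg_one_mul]
  rw [h2, h4]
  rw [mul_neg, h1]

lemma eta_eq_neg_one (cs : CoxeterSystem M W) {w t : W} (ht : cs.IsReflection t)
    (h : cs.length (w * t) < cs.length w) : eta cs w t = -1 := by
  have hw : w = (w * t) * t := by rw [mul_assoc, ht.mul_self, mul_one]
  have htt : t * t * t⁻¹ = t := by rw [ht.mul_self, one_mul, ht.inv]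
  have h5 : eta cs (w * t) t = 1 := by
    apply eta_eq_one
    rw [← hw]
    omega
  nth_rewrite 1 [hw]
  rw [eta_mul, htt, eta_refl_self cs ht, h5, mul_one]

theorem length_lemma (cs : CoxeterSystem M W) {v w : W} {a b : B}
    (h1 : v * cs.simple a * v⁻¹ = cs.simple b)
    (h2 : cs.length (v * cs.simple a) = cs.length v + 1)
    (h3 : cs.length (w * cs.simple b) = cs.length w + 1) :
    cs.length (w * v * cs.simple a) = cs.length (w * v) + 1 := by
  have hv : eta cs v (cs.simple a) = 1 := eta_eq_one cs (by omega)
  have hw : eta cs w (cs.simple b) = 1 := eta_eq_one cs (by omega)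
  have hwv : eta cs (w * v) (cs.simple a) = 1 := by rw [eta_mul, h1, hv, hw, one_mul]
  have hne : ¬ cs.length (w * v * cs.simple a) < cs.length (w * v) := by
    intro hlt
    have := eta_eq_neg_one cs (cs.isReflection_simple a) hlt
    rw [hwv] at this
    exact absurd this (by decide)
  rcases cs.length_mul_simple (w * v) a with h | h
  · exact h
  · omega

end SignRep


lemma mapsSimple_one (cs : CoxeterSystem M W) (a : B) : MapsSimple cs 1 a a := by
  constructor
  · simp
  · simp [cs.length_simple]

lemma mapsSimple_mul (cs : CoxeterSystem M W) {v w : W} {a b c : B}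
    (hv : MapsSimple cs v a b) (hw : MapsSimple cs w b c) : MapsSimple cs (w * v) a c := by
  obtain ⟨hv1, hv2⟩ := hv
  obtain ⟨hw1, hw2⟩ := hw
  constructor
  · rw [mul_inv_rev, show w * v * cs.simple a * (v⁻¹ * w⁻¹)
      = w * (v * cs.simple a * v⁻¹) * w⁻¹ by group, hv1, hw1]
  · exact SignRep.length_lemma cs hv1 hv2 hw2

/-- The relations `→_L` and `→_R` are partial orders on `Γ(W)`: reflexive (on `Γ(W)`),
transitive, and antisymmetric. -/
theorem redL_redR_partialOrders (cs : CoxeterSystem M W) :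
    ((∀ x : W × B × B, InGamma cs x → RedL cs x x) ∧
      (∀ x y z : W × B × B, RedL cs x y → RedL cs y z → RedL cs x z) ∧
      (∀ x y : W × B × B, RedL cs x y → RedL cs y x → x = y)) ∧
    ((∀ x : W × B × B, InGamma cs x → RedR cs x x) ∧
      (∀ x y z : W × B × B, RedR cs x y → RedR cs y z → RedR cs x z) ∧
      (∀ x y : W × B × B, RedR cs x y → RedR cs y x → x = y)) := by
  constructor
  · refine ⟨?_, ?_, ?_⟩
    · -- reflexivity of RedL
      rintro ⟨w, i, j⟩ h
      refine ⟨h, h, ?_, rfl, ?_⟩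
      · show cs.length w + cs.length (w * w⁻¹) = cs.length w
        simp
      · show MapsSimple cs (w * w⁻¹) i i
        rw [mul_inv_cancel]
        exact mapsSimple_one cs i
    · -- transitivity of RedL
      rintro ⟨xw, xi, xj⟩ ⟨yw, yi, yj⟩ ⟨zw, zi, zj⟩ hxy hyz
      obtain ⟨hgx, hgy, hlxy, hjxy, hmxy⟩ := hxy
      obtain ⟨_, hgz, hlyz, hjyz, hmyz⟩ := hyz
      dsimp only at hlxy hlyz hjxy hjyz hmxy hmyz
      refine ⟨hgx, hgz, ?_, by dsimp only; rw [hjyz, hjxy], ?_⟩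
      · show cs.length zw + cs.length (xw * zw⁻¹) = cs.length xw
        unfold WeakLeftLE at hlxy hlyz
        have h1 : xw * zw⁻¹ = (xw * yw⁻¹) * (yw * zw⁻¹) := by group
        have h2 := cs.length_mul_le (xw * yw⁻¹) (yw * zw⁻¹)
        rw [← h1] at h2
        have h3 := cs.length_mul_le (xw * zw⁻¹) zw
        have h4 : xw * zw⁻¹ * zw = xw := by group
        rw [h4] at h3
        omega
      · have := mapsSimple_mul cs hmyz hmxy
        show MapsSimple cs (xw * zw⁻¹) zi xi
        rwa [show (xw * yw⁻¹) * (yw * zw⁻¹) = xw * zw⁻¹ by group] at this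
    · -- antisymmetry of RedL
      rintro ⟨xw, xi, xj⟩ ⟨yw, yi, yj⟩ hxy hyx
      obtain ⟨hgx, hgy, hlxy, hjxy, hmxy⟩ := hxy
      obtain ⟨_, _, hlyx, hjyx, hmyx⟩ := hyx
      dsimp only at hlxy hlyx hjxy hjyx hmxy hmyx
      unfold WeakLeftLE at hlxy hlyx
      have h0 : cs.length (xw * yw⁻¹) = 0 := by omega
      have hw : xw = yw := mul_inv_eq_one.mp (cs.length_eq_zero_iff.mp h0)
      subst hw
      have hsimple : cs.simple yi = cs.simple xi := by
        have h1 := hmxy.1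
        rw [mul_inv_cancel] at h1
        simpa using h1
      have hi : yi = xi := GeomRep.simple_injective cs hsimple
      rw [hi, hjxy]
  · refine ⟨?_, ?_, ?_⟩
    · -- reflexivity of RedR
      rintro ⟨w, i, j⟩ h
      refine ⟨h, h, ?_, rfl, ?_⟩
      · show cs.length w + cs.length (w⁻¹ * w) = cs.length w
        simp
      · show MapsSimple cs (w⁻¹ * w) j j
        rw [inv_mul_cancel]
        exact mapsSimple_one cs j
    · -- transitivity of RedR
      rintro ⟨xw, xi, xj⟩ ⟨yw, yi, yj⟩ ⟨zw, zi, zj⟩ hxy hyz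
      obtain ⟨hgx, hgy, hlxy, hixy, hmxy⟩ := hxy
      obtain ⟨_, hgz, hlyz, hiyz, hmyz⟩ := hyz
      dsimp only at hlxy hlyz hixy hiyz hmxy hmyz
      refine ⟨hgx, hgz, ?_, by dsimp only; rw [hiyz, hixy], ?_⟩
      · show cs.length zw + cs.length (zw⁻¹ * xw) = cs.length xw
        unfold WeakRightLE at hlxy hlyz
        have h1 : zw⁻¹ * xw = (zw⁻¹ * yw) * (yw⁻¹ * xw) := by group
        have h2 := cs.length_mul_le (zw⁻¹ * yw) (yw⁻¹ * xw)
        rw [← h1] at h2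
        have h3 := cs.length_mul_le zw (zw⁻¹ * xw)
        have h4 : zw * (zw⁻¹ * xw) = xw := by group
        rw [h4] at h3
        omega
      · have := mapsSimple_mul cs hmxy hmyz
        show MapsSimple cs (zw⁻¹ * xw) xj zj
        rwa [show (zw⁻¹ * yw) * (yw⁻¹ * xw) = zw⁻¹ * xw by group] at this
    · -- antisymmetry of RedR
      rintro ⟨xw, xi, xj⟩ ⟨yw, yi, yj⟩ hxy hyx
      obtain ⟨hgx, hgy, hlxy, hixy, hmxy⟩ := hxy
      obtain ⟨_, _, hlyx, hiyx, hmyx⟩ := hyx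
      dsimp only at hlxy hlyx hixy hiyx hmxy hmyx
      unfold WeakRightLE at hlxy hlyx
      have h0 : cs.length (yw⁻¹ * xw) = 0 := by omega
      have hw : yw = xw := inv_mul_eq_one.mp (cs.length_eq_zero_iff.mp h0)
      subst hw
      have hsimple : cs.simple xj = cs.simple yj := by
        have h1 := hmxy.1
        rw [inv_mul_cancel] at h1
        simpa using h1
      have hj : xj = yj := GeomRep.simple_injective cs hsimple
      rw [hj, hixy]


end NilpotencyIndices
end

section
/- If w ∈ W has exactly one left descent or exactly one right descent, then the support of w is connected in the Coxeter diagram: there do not exist nonempty disjoint sets I₁, I₂ ⊆ I with I₁ ∪ I₂ = supp(w) and M i j = 2 for all i ∈ I₁ and j ∈ I₂. -/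
open CoxeterSystem

namespace NilpotencyIndices

variable {B : Type*} {W : Type*} [Group W] {M : CoxeterMatrix B}

open Classical in
private lemma simple_comm_of_M_eq_two (cs : CoxeterSystem M W) {a b : B} (h : M a b = 2) :
    Commute (cs.simple a) (cs.simple b) := by
  have hp := cs.simple_mul_simple_pow a b
  rw [h, pow_two] at hp
  have h1 : cs.simple a * cs.simple b = (cs.simple a * cs.simple b)⁻¹ :=
    eq_inv_of_mul_eq_one_left hp
  rw [mul_inv_rev, cs.inv_simple, cs.inv_simple] at h1
  exact h1

private lemma commute_wordProd (cs : CoxeterSystem M W) (g : W) (m : List B)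
    (h : ∀ x ∈ m, Commute g (cs.simple x)) : Commute g (cs.wordProd m) := by
  apply Commute.list_prod_right
  intro x hx
  obtain ⟨a, ha, rfl⟩ := List.mem_map.mp hx
  exact h a ha

open Classical in
private lemma wordProd_filter_split (cs : CoxeterSystem M W) (p : B → Prop) :
    ∀ l : List B, (∀ a ∈ l, ∀ b ∈ l, p a → ¬ p b → Commute (cs.simple a) (cs.simple b)) →
    cs.wordProd l = cs.wordProd (l.filter (fun x => decide (p x))) *
      cs.wordProd (l.filter (fun x => !decide (p x)))
  | [], _ => by simp [cs.wordProd_nil]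
  | x :: t, h => by
    have ht : ∀ a ∈ t, ∀ b ∈ t, p a → ¬ p b → Commute (cs.simple a) (cs.simple b) :=
      fun a ha b hb => h a (List.mem_cons_of_mem _ ha) b (List.mem_cons_of_mem _ hb)
    have ih := wordProd_filter_split cs p t ht
    by_cases hx : p x
    · rw [List.filter_cons_of_pos (by simpa using hx),
        List.filter_cons_of_neg (by simpa using hx), cs.wordProd_cons, cs.wordProd_cons, ih,
        mul_assoc]
    · rw [List.filter_cons_of_neg (by simpa using hx),
        List.filter_cons_of_pos (by simpa using hx), cs.wordProd_cons, ih]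
      have hc : Commute (cs.simple x) (cs.wordProd (t.filter (fun y => decide (p y)))) := by
        apply commute_wordProd
        intro y hy
        have hyt := List.mem_of_mem_filter hy
        have hpy : p y := by simpa using List.of_mem_filter hy
        exact (h y (List.mem_cons_of_mem _ hyt) x (List.mem_cons_self) hpy hx).symm
      rw [cs.wordProd_cons, ← mul_assoc, ← mul_assoc, hc.eq]

private lemma head_isLeftDescent (cs : CoxeterSystem M W) {i : B} {t : List B}
    (hr : cs.IsReduced (i :: t)) : cs.IsLeftDescent (cs.wordProd (i :: t)) i := by
  have hr' : cs.length (cs.wordProd (i :: t)) = (i :: t).length := hr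
  rw [CoxeterSystem.IsLeftDescent, cs.wordProd_cons, cs.simple_mul_simple_cancel_left,
    ← cs.wordProd_cons, hr']
  calc cs.length (cs.wordProd t) ≤ t.length := cs.length_wordProd_le t
    _ < (i :: t).length := by simp

private lemma last_isRightDescent (cs : CoxeterSystem M W) {j : B} {t : List B}
    (hr : cs.IsReduced (t ++ [j])) : cs.IsRightDescent (cs.wordProd (t ++ [j])) j := by
  have hr' : cs.length (cs.wordProd (t ++ [j])) = (t ++ [j]).length := hr
  have hconc : cs.wordProd (t ++ [j]) = cs.wordProd t * cs.simple j := by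
    rw [cs.wordProd_append, cs.wordProd_cons, cs.wordProd_nil, mul_one]
  rw [CoxeterSystem.IsRightDescent, hconc, cs.simple_mul_simple_cancel_right, ← hconc, hr']
  calc cs.length (cs.wordProd t) ≤ t.length := cs.length_wordProd_le t
    _ < (t ++ [j]).length := by simp

/-- If `w` has exactly one left descent or exactly one right descent, then the support of `w`
is connected in the Coxeter diagram. -/
theorem support_connected (cs : CoxeterSystem M W) (w : W)
    (h : (∃! i, cs.IsLeftDescent w i) ∨ (∃! j, cs.IsRightDescent w j)) :
    ¬ ∃ I₁ I₂ : Set B, I₁.Nonempty ∧ I₂.Nonempty ∧ Disjoint I₁ I₂ ∧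
        I₁ ∪ I₂ = Supp cs w ∧ ∀ i ∈ I₁, ∀ j ∈ I₂, M i j = 2 := by
  rintro ⟨I₁, I₂, ⟨a, ha⟩, ⟨b, hb⟩, hdisj, hunion, hcomm⟩
  classical
  have hne : ∀ x, x ∈ I₁ → x ∈ I₂ → False := fun x h1 h2 =>
    Set.disjoint_left.mp hdisj h1 h2
  -- a key contradiction: descents in both parts
  have key : ∀ i₁ i₂ j₁ j₂ : B, i₁ ∈ I₁ → i₂ ∈ I₂ → j₁ ∈ I₁ → j₂ ∈ I₂ →
      cs.IsLeftDescent w i₁ → cs.IsLeftDescent w i₂ →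
      cs.IsRightDescent w j₁ → cs.IsRightDescent w j₂ → False := by
    intro i₁ i₂ j₁ j₂ m1 m2 m3 m4 d1 d2 d3 d4
    rcases h with ⟨i, -, hu⟩ | ⟨j, -, hu⟩
    · exact hne i₁ m1 (((hu i₁ d1).trans (hu i₂ d2).symm) ▸ m2)
    · exact hne j₁ m3 (((hu j₁ d3).trans (hu j₂ d4).symm) ▸ m4)
  -- Claim A: every reduced word of w lies entirely in I₁ or entirely in I₂
  have claimA : ∀ l : List B, cs.IsReduced l → cs.wordProd l = w →
      (∀ x ∈ l, x ∈ I₁) ∨ (∀ x ∈ l, x ∈ I₂) := by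
    intro l hred hprod
    have hmem : ∀ x ∈ l, x ∈ I₁ ∪ I₂ := by
      intro x hx
      rw [hunion]
      exact ⟨l, hred, hprod, hx⟩
    set l₁ := l.filter (fun x => decide (x ∈ I₁)) with hl₁
    set l₂ := l.filter (fun x => !decide (x ∈ I₁)) with hl₂
    have hm1 : ∀ x ∈ l₁, x ∈ I₁ := fun x hx => by simpa using List.of_mem_filter hx
    have hm2 : ∀ x ∈ l₂, x ∈ I₂ := by
      intro x hx
      have h1 : x ∉ I₁ := by simpa using List.of_mem_filter hx
      rcases hmem x (List.mem_of_mem_filter hx) with h' | h'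
      · exact absurd h' h1
      · exact h'
    have hcc : ∀ a' ∈ l, ∀ b' ∈ l, a' ∈ I₁ → ¬ a' ∈ I₁ → False := fun _ _ _ _ h1 h2 => h2 h1
    have hsplit : cs.wordProd l = cs.wordProd l₁ * cs.wordProd l₂ := by
      apply wordProd_filter_split cs (fun x => x ∈ I₁) l
      intro a' ha' b' hb' hpa hpb
      have hb2 : b' ∈ I₂ := by
        rcases hmem b' hb' with h' | h'
        · exact absurd h' hpb
        · exact h'
      exact simple_comm_of_M_eq_two cs (hcomm a' hpa b' hb2)
    have hlen : l₁.length + l₂.length = l.length := by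
      have := (List.filter_append_perm (fun x => decide (x ∈ I₁)) l).length_eq
      simpa using this
    have hred' : cs.length (cs.wordProd l) = l.length := hred
    have hcomm12 : Commute (cs.wordProd l₁) (cs.wordProd l₂) := by
      apply commute_wordProd
      intro x hx
      exact (commute_wordProd cs (cs.simple x) l₁ (fun y hy =>
        (simple_comm_of_M_eq_two cs (hcomm y (hm1 y hy) x (hm2 x hx))).symm)).symm
    have hprod12 : cs.wordProd (l₁ ++ l₂) = w := by
      rw [cs.wordProd_append, ← hsplit, hprod]
    have hprod21 : cs.wordProd (l₂ ++ l₁) = w := by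
      rw [cs.wordProd_append, ← hcomm12.eq, ← hsplit, hprod]
    have hred12 : cs.IsReduced (l₁ ++ l₂) := by
      rw [CoxeterSystem.IsReduced, hprod12, ← hprod, hred', List.length_append, hlen]
    have hred21 : cs.IsReduced (l₂ ++ l₁) := by
      rw [CoxeterSystem.IsReduced, hprod21, ← hprod, hred', List.length_append,
        Nat.add_comm l₂.length l₁.length, hlen]
    by_cases h1 : l₁ = []
    · right
      intro x hx
      rcases hmem x hx with h' | h'
      · exfalso
        have : x ∈ l₁ := by
          rw [hl₁, List.mem_filter]
          exact ⟨hx, by simpa using h'⟩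
        rw [h1] at this; exact absurd this (List.not_mem_nil)
      · exact h'
    by_cases h2 : l₂ = []
    · left
      intro x hx
      by_contra hx1
      have : x ∈ l₂ := by
        rw [hl₂, List.mem_filter]
        exact ⟨hx, by simpa using hx1⟩
      rw [h2] at this; exact absurd this (List.not_mem_nil)
    -- both nonempty: contradiction via key
    exfalso
    obtain ⟨i₁, t₁, he1⟩ := List.exists_cons_of_ne_nil h1
    obtain ⟨i₂, t₂, he2⟩ := List.exists_cons_of_ne_nil h2
    obtain ⟨t₁', j₁, he1'⟩ := (List.eq_nil_or_concat l₁).resolve_left h1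
    obtain ⟨t₂', j₂, he2'⟩ := (List.eq_nil_or_concat l₂).resolve_left h2
    rw [List.concat_eq_append] at he1' he2'
    have d1 : cs.IsLeftDescent w i₁ := by
      have hr : cs.IsReduced (i₁ :: (t₁ ++ l₂)) := by
        rw [← List.cons_append, ← he1]; exact hred12
      have := head_isLeftDescent cs hr
      rwa [← List.cons_append, ← he1, hprod12] at this
    have d2 : cs.IsLeftDescent w i₂ := by
      have hr : cs.IsReduced (i₂ :: (t₂ ++ l₁)) := by
        rw [← List.cons_append, ← he2]; exact hred21
      have := head_isLeftDescent cs hr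
      rwa [← List.cons_append, ← he2, hprod21] at this
    have d3 : cs.IsRightDescent w j₁ := by
      have hr : cs.IsReduced ((l₂ ++ t₁') ++ [j₁]) := by
        rw [List.append_assoc, ← he1']; exact hred21
      have := last_isRightDescent cs hr
      rwa [List.append_assoc, ← he1', hprod21] at this
    have d4 : cs.IsRightDescent w j₂ := by
      have hr : cs.IsReduced ((l₁ ++ t₂') ++ [j₂]) := by
        rw [List.append_assoc, ← he2']; exact hred12
      have := last_isRightDescent cs hr
      rwa [List.append_assoc, ← he2', hprod12] at this
    exact key i₁ i₂ j₁ j₂ (hm1 i₁ (by rw [he1]; exact List.mem_cons_self))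
      (hm2 i₂ (by rw [he2]; exact List.mem_cons_self))
      (hm1 j₁ (by rw [he1']; simp)) (hm2 j₂ (by rw [he2']; simp)) d1 d2 d3 d4
  -- Now use a ∈ I₁ ⊆ Supp w and b ∈ I₂ ⊆ Supp w
  have haS : a ∈ Supp cs w := hunion ▸ Set.mem_union_left _ ha
  have hbS : b ∈ Supp cs w := hunion ▸ Set.mem_union_right _ hb
  obtain ⟨la, hra, hpa, hmema⟩ := haS
  obtain ⟨lb, hrb, hpb, hmemb⟩ := hbS
  have hla : ∀ x ∈ la, x ∈ I₁ := by
    rcases claimA la hra hpa with h' | h'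
    · exact h'
    · exact absurd (h' a hmema) (fun h2 => hne a ha h2)
  have hlb : ∀ x ∈ lb, x ∈ I₂ := by
    rcases claimA lb hrb hpb with h' | h'
    · exact absurd (h' b hmemb) (fun h2 => hne b h2 hb)
    · exact h'
  have hlane : la ≠ [] := fun h' => by rw [h'] at hmema; exact List.not_mem_nil hmema
  have hlbne : lb ≠ [] := fun h' => by rw [h'] at hmemb; exact List.not_mem_nil hmemb
  obtain ⟨i₁, t₁, rfl⟩ := List.exists_cons_of_ne_nil hlane
  obtain ⟨i₂, t₂, rfl⟩ := List.exists_cons_of_ne_nil hlbne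
  obtain ⟨t₁', j₁, h1'⟩ := (List.eq_nil_or_concat (i₁ :: t₁)).resolve_left hlane
  obtain ⟨t₂', j₂, h2'⟩ := (List.eq_nil_or_concat (i₂ :: t₂)).resolve_left hlbne
  rw [List.concat_eq_append] at h1' h2' 
  have d1 : cs.IsLeftDescent w i₁ := hpa ▸ head_isLeftDescent cs hra
  have d2 : cs.IsLeftDescent w i₂ := hpb ▸ head_isLeftDescent cs hrb
  have d3 : cs.IsRightDescent w j₁ := by
    have := last_isRightDescent cs (t := t₁') (j := j₁) (h1' ▸ hra)
    rw [← h1', hpa] at this; exact this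
  have d4 : cs.IsRightDescent w j₂ := by
    have := last_isRightDescent cs (t := t₂') (j := j₂) (h2' ▸ hrb)
    rw [← h2', hpb] at this; exact this
  exact key i₁ i₂ j₁ j₂ (hla i₁ (List.mem_cons_self)) (hlb i₂ (List.mem_cons_self))
    (hla j₁ (by rw [h1']; simp)) (hlb j₂ (by rw [h2']; simp)) d1 d2 d3 d4


end NilpotencyIndices
end

section
/- For n ≥ 2, a permutation σ ∈ S_n is bigrassmannian with full support if and only if there exist integers i, k ≥ 1 with i + k = n such that σ(t) = t + k for all 1 ≤ t ≤ i and σ(t) = t − i for all i < t ≤ n. Consequently, S_n contains exactly n − 1 bigrassmannian permutations of full support. -/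
namespace NilpotencyIndices


/-- `a` is a (combinatorial) right descent of `σ`: `σ(a) > σ(a+1)`
(`a` ranges over positions having a successor). -/
def IsRightDescentPerm {n : ℕ} (σ : Equiv.Perm (Fin n)) (a : Fin n) : Prop :=
  ∃ b : Fin n, (b : ℕ) = (a : ℕ) + 1 ∧ σ b < σ a

/-- `a` is a left descent of `σ`: `σ⁻¹(a) > σ⁻¹(a+1)`. -/
def IsLeftDescentPerm {n : ℕ} (σ : Equiv.Perm (Fin n)) (a : Fin n) : Prop :=
  IsRightDescentPerm σ⁻¹ a

/-- `σ` is bigrassmannian: it has exactly one right descent and exactly one left descent. -/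
def BigrassmannianPerm {n : ℕ} (σ : Equiv.Perm (Fin n)) : Prop :=
  (∃! a, IsRightDescentPerm σ a) ∧ (∃! a, IsLeftDescentPerm σ a)

/-- `σ` has full support: `σ({1, …, m}) ≠ {1, …, m}` for every `1 ≤ m ≤ n - 1`
(0-based: the initial segment of size `m` is not stabilized). -/
def FullSupportPerm {n : ℕ} (σ : Equiv.Perm (Fin n)) : Prop :=
  ∀ m : ℕ, 1 ≤ m → m ≤ n - 1 →
    (⇑σ) '' {x : Fin n | (x : ℕ) < m} ≠ {x : Fin n | (x : ℕ) < m}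


variable {n : ℕ}

lemma isRightDescent_iff (σ : Equiv.Perm (Fin n)) (a : Fin n) :
    IsRightDescentPerm σ a ↔ ∃ h : (a : ℕ) + 1 < n, (σ ⟨(a:ℕ)+1, h⟩ : ℕ) < σ a := by
  constructor
  · rintro ⟨b, hb, hlt⟩
    have hbn : (a:ℕ) + 1 < n := hb ▸ b.isLt
    refine ⟨hbn, ?_⟩
    have : (⟨(a:ℕ)+1, hbn⟩ : Fin n) = b := by ext; simp [hb]
    rw [this]; exact hlt
  · rintro ⟨h, hlt⟩
    exact ⟨⟨(a:ℕ)+1, h⟩, rfl, hlt⟩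

lemma step_lt (σ : Equiv.Perm (Fin n)) (t : ℕ) (h : t + 1 < n)
    (hnd : ¬ IsRightDescentPerm σ ⟨t, by omega⟩) :
    (σ ⟨t, by omega⟩ : ℕ) < σ ⟨t+1, h⟩ := by
  have hne : σ ⟨t, by omega⟩ ≠ σ ⟨t+1, h⟩ := by
    intro hc
    have := σ.injective hc
    simp [Fin.ext_iff] at this
  have h2 : ¬ ((σ ⟨t+1, h⟩ : ℕ) < σ ⟨t, by omega⟩) := by
    intro hc
    exact hnd ⟨⟨t+1, h⟩, rfl, hc⟩
  have h3 : (σ ⟨t, by omega⟩ : ℕ) ≠ σ ⟨t+1, h⟩ := fun hc => hne (Fin.ext hc)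
  omega

lemma chain_le (σ : Equiv.Perm (Fin n)) (p q : ℕ) (hp : p < n) (hpq : p ≤ q) (hq : q < n)
    (hnd : ∀ r, p ≤ r → r < q → ∀ (hr : r < n), ¬ IsRightDescentPerm σ ⟨r, hr⟩) :
    (σ ⟨p, hp⟩ : ℕ) + (q - p) ≤ σ ⟨q, hq⟩ := by
  obtain ⟨d, rfl⟩ : ∃ d, q = p + d := ⟨q - p, by omega⟩
  induction d with
  | zero => simp
  | succ d ih =>
    have h1 : p + d < n := by omega
    have H := ih (by omega) h1 (fun r h1' h2' hr => hnd r h1' (by omega) hr)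
    have hstep : (σ ⟨p+d, h1⟩ : ℕ) < σ ⟨p+(d+1), hq⟩ :=
      step_lt σ (p+d) (by omega) (hnd (p+d) (by omega) (by omega) (by omega))
    omega

lemma not_fix_zero (hn : 2 ≤ n) (σ : Equiv.Perm (Fin n)) (hfs : FullSupportPerm σ) :
    (σ ⟨0, by omega⟩ : ℕ) ≠ 0 := by
  intro hc
  apply hfs 1 le_rfl (by omega)
  have hset : {x : Fin n | (x:ℕ) < 1} = {(⟨0, by omega⟩ : Fin n)} := by
    ext x; simp [Fin.ext_iff, Nat.lt_one_iff]
  rw [hset, Set.image_singleton]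
  congr 1
  ext
  simpa using hc

lemma not_fix_last (hn : 2 ≤ n) (σ : Equiv.Perm (Fin n)) (hfs : FullSupportPerm σ) :
    (σ ⟨n-1, by omega⟩ : ℕ) ≠ n - 1 := by
  intro hc
  have hfix : σ ⟨n-1, by omega⟩ = ⟨n-1, by omega⟩ := Fin.ext hc
  apply hfs (n-1) (by omega) le_rfl
  ext y
  simp only [Set.mem_image, Set.mem_setOf_eq]
  constructor
  · rintro ⟨x, hx, rfl⟩
    have hne : σ x ≠ ⟨n-1, by omega⟩ := by
      intro h
      rw [← hfix] at h
      have := σ.injective h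
      rw [this] at hx
      have : (n:ℕ) - 1 < n - 1 := by simpa using hx
      omega
    have h1 := (σ x).isLt
    have h2 : (σ x : ℕ) ≠ n - 1 := fun hc' => hne (Fin.ext hc')
    omega
  · intro hy
    refine ⟨σ⁻¹ y, ?_, Equiv.apply_symm_apply σ y⟩
    have hne : σ⁻¹ y ≠ ⟨n-1, by omega⟩ := by
      intro h
      have : y = σ ⟨n-1, by omega⟩ := by rw [← h, Equiv.Perm.coe_inv, Equiv.apply_symm_apply]
      rw [hfix] at this
      rw [this] at hy
      have : (n:ℕ) - 1 < n - 1 := by simpa using hy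
      omega
    have h1 := (σ⁻¹ y).isLt
    have h2 : ((σ⁻¹ y : Fin n) : ℕ) ≠ n - 1 := fun hc' => hne (Fin.ext hc')
    show ((σ⁻¹ y : Fin n) : ℕ) < n - 1
    omega

lemma endpoints (hn : 2 ≤ n) (σ : Equiv.Perm (Fin n)) (a : Fin n)
    (ha : IsRightDescentPerm σ a) (haU : ∀ r, IsRightDescentPerm σ r → r = a)
    (h0 : (σ ⟨0, by omega⟩ : ℕ) ≠ 0) (hN : (σ ⟨n-1, by omega⟩ : ℕ) ≠ n - 1) :
    ∃ h : (a:ℕ)+1 < n, (σ ⟨(a:ℕ)+1, h⟩ : ℕ) = 0 ∧ (σ a : ℕ) = n - 1 := by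
  obtain ⟨han, -⟩ := (isRightDescent_iff σ a).mp ha
  refine ⟨han, ?_, ?_⟩
  · set p := σ⁻¹ ⟨0, by omega⟩ with hpdef
    have hσp : σ p = ⟨0, by omega⟩ := Equiv.apply_symm_apply σ _
    have hσpv : (σ p : ℕ) = 0 := by rw [hσp]
    have hp0 : (p:ℕ) ≠ 0 := by
      intro h
      apply h0
      have : (⟨0, by omega⟩ : Fin n) = p := by ext; simp [h]
      rw [this, hσpv]
    have hplt : (p:ℕ) - 1 + 1 < n := by have := p.isLt; omega
    have hd : IsRightDescentPerm σ ⟨(p:ℕ)-1, by omega⟩ := by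
      rw [isRightDescent_iff]
      refine ⟨by simpa using hplt, ?_⟩
      have e : (⟨((⟨(p:ℕ)-1, by omega⟩ : Fin n) : ℕ)+1, by simpa using hplt⟩ : Fin n) = p := by
        ext; simp; omega
      rw [e]
      have hne : σ ⟨(p:ℕ)-1, by omega⟩ ≠ σ p := by
        intro hc
        have := σ.injective hc
        rw [Fin.ext_iff] at this
        simp at this; omega
      have hnev : (σ ⟨(p:ℕ)-1, by omega⟩ : ℕ) ≠ 0 := by
        intro hc; exact hne (Fin.ext (by rw [hc, hσpv]))
      rw [hσpv]
      omega
    have hpa := haU _ hd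
    rw [Fin.ext_iff] at hpa
    simp at hpa
    have : (⟨(a:ℕ)+1, han⟩ : Fin n) = p := by ext; simp; omega
    rw [this, hσpv]
  · set q := σ⁻¹ ⟨n-1, by omega⟩ with hqdef
    have hσq : σ q = ⟨n-1, by omega⟩ := Equiv.apply_symm_apply σ _
    have hσqv : (σ q : ℕ) = n - 1 := by rw [hσq]
    have hqN : (q:ℕ) ≠ n - 1 := by
      intro h
      apply hN
      have : (⟨n-1, by omega⟩ : Fin n) = q := by ext; simp [h]
      rw [this, hσqv]
    have hqlt : (q:ℕ) + 1 < n := by have := q.isLt; omega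
    have hd : IsRightDescentPerm σ q := by
      rw [isRightDescent_iff]
      refine ⟨hqlt, ?_⟩
      have hne : σ ⟨(q:ℕ)+1, hqlt⟩ ≠ σ q := by
        intro hc
        have := σ.injective hc
        rw [Fin.ext_iff] at this
        simp at this
      have hnev : (σ ⟨(q:ℕ)+1, hqlt⟩ : ℕ) ≠ n - 1 := by
        intro hc; exact hne (Fin.ext (by rw [hc, hσqv]))
      have := (σ ⟨(q:ℕ)+1, hqlt⟩).isLt
      rw [hσqv]
      omega
    have hqa := haU _ hd
    rw [hqa] at hσqv
    exact hσqv

lemma forward (hn : 2 ≤ n) (σ : Equiv.Perm (Fin n))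
    (hbg : BigrassmannianPerm σ) (hfs : FullSupportPerm σ) :
    ∃ i k : ℕ, 1 ≤ i ∧ 1 ≤ k ∧ i + k = n ∧
      (∀ x : Fin n, (x : ℕ) < i → (σ x : ℕ) = (x : ℕ) + k) ∧
      (∀ x : Fin n, i ≤ (x : ℕ) → (σ x : ℕ) = (x : ℕ) - i) := by
  obtain ⟨⟨a, ha, haU⟩, ⟨b, hb, hbU⟩⟩ := hbg
  have h0n : 0 < n := by omega
  have hn1 : n - 1 < n := by omega
  have h0 := not_fix_zero hn σ hfs
  have hN := not_fix_last hn σ hfs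
  obtain ⟨han, hA0, hAN⟩ := endpoints hn σ a ha haU h0 hN
  have hfs' : FullSupportPerm σ⁻¹ := by
    intro m hm1 hm2 heq
    apply hfs m hm1 hm2
    have himg : (⇑σ) '' ((⇑σ⁻¹) '' {x : Fin n | (x:ℕ) < m}) = {x : Fin n | (x:ℕ) < m} := by
      rw [Set.image_image]
      simp [Equiv.Perm.coe_inv]
    rw [heq] at himg
    exact himg
  have h0' := not_fix_zero hn σ⁻¹ hfs'
  have hN' := not_fix_last hn σ⁻¹ hfs'
  obtain ⟨hbn, hB0, hBN⟩ := endpoints hn σ⁻¹ b hb hbU h0' hN'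
  have hS0 : (σ ⟨0, h0n⟩ : ℕ) = (b:ℕ) + 1 := by
    have e1 : σ⁻¹ ⟨(b:ℕ)+1, hbn⟩ = ⟨0, h0n⟩ := Fin.ext hB0
    have e2 := congrArg σ e1
    rw [Equiv.Perm.coe_inv, Equiv.apply_symm_apply] at e2
    rw [← e2]
  have hSN : (σ ⟨n-1, hn1⟩ : ℕ) = b := by
    have e1 : σ⁻¹ b = ⟨n-1, hn1⟩ := Fin.ext hBN
    have e2 := congrArg σ e1
    rw [Equiv.Perm.coe_inv, Equiv.apply_symm_apply] at e2
    rw [← e2]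
  have hAN' : (σ ⟨(a:ℕ), a.isLt⟩ : ℕ) = n - 1 := by rw [Fin.eta]; exact hAN
  have hnd : ∀ r, r ≠ (a:ℕ) → ∀ (hr : r < n), ¬ IsRightDescentPerm σ ⟨r, hr⟩ := by
    intro r hrne hr hd
    have he := haU _ hd
    rw [Fin.ext_iff] at he
    simp at he
    exact hrne he
  have key : ∀ (p q : ℕ) (hp : p < n) (hq : q < n), p ≤ q → ((a:ℕ)+1 ≤ p ∨ q ≤ (a:ℕ)) →
      (σ ⟨p, hp⟩ : ℕ) + (q - p) ≤ σ ⟨q, hq⟩ := by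
    intro p q hp hq hpq hside
    apply chain_le σ p q hp hpq hq
    intro r h1 h2 hr
    apply hnd
    omega
  have keyF : ∀ (p : ℕ) (hp : p < n) (q : Fin n), p ≤ (q:ℕ) → ((a:ℕ)+1 ≤ p ∨ (q:ℕ) ≤ (a:ℕ)) →
      (σ ⟨p, hp⟩ : ℕ) + ((q:ℕ) - p) ≤ σ q := by
    intro p hp q hpq hside
    have hres := key p q hp q.isLt hpq hside
    rwa [Fin.eta] at hres
  have c1 := keyF 0 h0n a (by omega) (Or.inr le_rfl)
  have c2 := key ((a:ℕ)+1) (n-1) han hn1 (by omega) (by omega)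
  refine ⟨(a:ℕ)+1, (b:ℕ)+1, by omega, by omega, by omega, ?_, ?_⟩
  · intro x hx
    have hxlt := x.isLt
    have l1 := keyF 0 h0n x (by omega) (by omega)
    have l2 := key (x:ℕ) (a:ℕ) x.isLt a.isLt (by omega) (by omega)
    rw [Fin.eta] at l2
    omega
  · intro x hx
    have hxlt := x.isLt
    have l1 := keyF ((a:ℕ)+1) han x (by omega) (by omega)
    have l2 := key (x:ℕ) (n-1) x.isLt hn1 (by omega) (by omega)
    rw [Fin.eta] at l2
    omega

lemma rotation_descents (hn : 2 ≤ n) (i k : ℕ) (hi : 1 ≤ i) (hk : 1 ≤ k) (hik : i + k = n)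
    (σ : Equiv.Perm (Fin n))
    (h1 : ∀ x : Fin n, (x:ℕ) < i → (σ x : ℕ) = (x:ℕ) + k)
    (h2 : ∀ x : Fin n, i ≤ (x:ℕ) → (σ x : ℕ) = (x:ℕ) - i) :
    ∃! a, IsRightDescentPerm σ a := by
  refine ⟨⟨i-1, by omega⟩, ?_, ?_⟩
  · apply (isRightDescent_iff σ ⟨i-1, by omega⟩).mpr
    refine ⟨by simp; omega, ?_⟩
    have e1 := h1 ⟨i-1, by omega⟩ (by simp; omega)
    have e2 := h2 ⟨(((⟨i-1, by omega⟩ : Fin n)):ℕ)+1, by simp; omega⟩ (by simp; omega)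
    simp only [Fin.val_mk] at e1 e2 ⊢
    omega
  · intro r hr
    rw [isRightDescent_iff] at hr
    obtain ⟨hr1, hr2⟩ := hr
    apply Fin.ext
    simp only [Fin.val_mk]
    by_contra hne
    rcases Nat.lt_or_ge ((r:ℕ)+1) i with hc | hc
    · have e1 := h1 r (by omega)
      have e2 := h1 ⟨(r:ℕ)+1, hr1⟩ (by simpa using hc)
      simp only [Fin.val_mk] at e2
      omega
    · have hri : i ≤ (r:ℕ) := by omega
      have e1 := h2 r hri
      have e2 := h2 ⟨(r:ℕ)+1, hr1⟩ (by simp; omega)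
      simp only [Fin.val_mk] at e2
      omega

lemma rotation_inv (hn : 2 ≤ n) (i k : ℕ) (hi : 1 ≤ i) (hk : 1 ≤ k) (hik : i + k = n)
    (σ : Equiv.Perm (Fin n))
    (h1 : ∀ x : Fin n, (x:ℕ) < i → (σ x : ℕ) = (x:ℕ) + k)
    (h2 : ∀ x : Fin n, i ≤ (x:ℕ) → (σ x : ℕ) = (x:ℕ) - i) :
    (∀ x : Fin n, (x:ℕ) < k → ((σ⁻¹ x : Fin n) : ℕ) = (x:ℕ) + i) ∧
    (∀ x : Fin n, k ≤ (x:ℕ) → ((σ⁻¹ x : Fin n) : ℕ) = (x:ℕ) - k) := by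
  have key : ∀ x : Fin n, ((x:ℕ) < k → ((σ⁻¹ x : Fin n) : ℕ) = (x:ℕ) + i) ∧
      (k ≤ (x:ℕ) → ((σ⁻¹ x : Fin n) : ℕ) = (x:ℕ) - k) := by
    intro x
    have hxy : σ (σ⁻¹ x) = x := Equiv.apply_symm_apply σ x
    have hylt := (σ⁻¹ x).isLt
    by_cases hyi : ((σ⁻¹ x : Fin n) : ℕ) < i
    · have e := h1 (σ⁻¹ x) hyi
      rw [hxy] at e
      constructor <;> intro <;> omega
    · have e := h2 (σ⁻¹ x) (by omega)
      rw [hxy] at e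
      constructor <;> intro <;> omega
  exact ⟨fun x hx => (key x).1 hx, fun x hx => (key x).2 hx⟩

lemma rotation_fullSupport (hn : 2 ≤ n) (i k : ℕ) (hi : 1 ≤ i) (hk : 1 ≤ k) (hik : i + k = n)
    (σ : Equiv.Perm (Fin n))
    (h1 : ∀ x : Fin n, (x:ℕ) < i → (σ x : ℕ) = (x:ℕ) + k) :
    FullSupportPerm σ := by
  intro m hm1 hm2 heq
  have hwit : ∃ x : Fin n, (x:ℕ) < m ∧ (x:ℕ) < i ∧ m ≤ (x:ℕ) + k := by
    by_cases hmk : m ≤ k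
    · exact ⟨⟨0, by omega⟩, by simp; omega, by simp; omega, by simp; omega⟩
    · exact ⟨⟨m - k, by omega⟩, by simp; omega, by simp; omega, by simp; omega⟩
  obtain ⟨x, hxm, hxi, hxk⟩ := hwit
  have hσx := h1 x hxi
  have hmem : σ x ∈ (⇑σ) '' {z : Fin n | (z:ℕ) < m} := ⟨x, hxm, rfl⟩
  rw [heq] at hmem
  have hlt : (σ x : ℕ) < m := hmem
  omega

/-- Classification of bigrassmannian permutations of full support in `S_n` (`n ≥ 2`):
they are exactly the "block-shift" permutations determined by `i + k = n` (`i, k ≥ 1`),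
and there are exactly `n - 1` of them. -/
theorem bigrassmannian_full_support_perm_classification (n : ℕ) (hn : 2 ≤ n) :
    (∀ σ : Equiv.Perm (Fin n),
      (BigrassmannianPerm σ ∧ FullSupportPerm σ) ↔
        ∃ i k : ℕ, 1 ≤ i ∧ 1 ≤ k ∧ i + k = n ∧
          (∀ x : Fin n, (x : ℕ) < i → (σ x : ℕ) = (x : ℕ) + k) ∧
          (∀ x : Fin n, i ≤ (x : ℕ) → (σ x : ℕ) = (x : ℕ) - i)) ∧
    Nat.card {σ : Equiv.Perm (Fin n) // BigrassmannianPerm σ ∧ FullSupportPerm σ} = n - 1 := by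
  haveI : NeZero n := ⟨by omega⟩
  have hiff : ∀ σ : Equiv.Perm (Fin n),
      (BigrassmannianPerm σ ∧ FullSupportPerm σ) ↔
        ∃ i k : ℕ, 1 ≤ i ∧ 1 ≤ k ∧ i + k = n ∧
          (∀ x : Fin n, (x : ℕ) < i → (σ x : ℕ) = (x : ℕ) + k) ∧
          (∀ x : Fin n, i ≤ (x : ℕ) → (σ x : ℕ) = (x : ℕ) - i) := by
    intro σ
    constructor
    · rintro ⟨h1, h2⟩
      exact forward hn σ h1 h2
    · rintro ⟨i, k, hi, hk, hik, h1, h2⟩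
      have hinv := rotation_inv hn i k hi hk hik σ h1 h2
      exact ⟨⟨rotation_descents hn i k hi hk hik σ h1 h2,
              rotation_descents hn k i hk hi (by omega) σ⁻¹ hinv.1 hinv.2⟩,
             rotation_fullSupport hn i k hi hk hik σ h1⟩
  refine ⟨hiff, ?_⟩
  have hval : ∀ (c x : Fin n), (((Equiv.addRight c) x : Fin n) : ℕ) = ((x:ℕ) + (c:ℕ)) % n := by
    intro c x
    show ((x + c : Fin n) : ℕ) = _
    rw [Fin.add_def]
  let f : Fin (n-1) → {σ : Equiv.Perm (Fin n) // BigrassmannianPerm σ ∧ FullSupportPerm σ} :=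
    fun j => ⟨Equiv.addRight (⟨(j:ℕ)+1, by have := j.isLt; omega⟩ : Fin n), by
      rw [hiff]
      refine ⟨n - ((j:ℕ)+1), (j:ℕ)+1, by have := j.isLt; omega, by omega,
        by have := j.isLt; omega, ?_, ?_⟩
      · intro x hx
        rw [hval]
        simp only [Fin.val_mk]
        have hxlt := x.isLt
        rw [Nat.mod_eq_of_lt (by omega)]
      · intro x hx
        rw [hval]
        simp only [Fin.val_mk]
        have hxlt := x.isLt
        have hj := j.isLt
        rw [Nat.mod_eq_sub_mod (by omega), Nat.mod_eq_of_lt (by omega)]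
        omega⟩
  have hbij : Function.Bijective f := by
    constructor
    · intro j j' h
      have h0 := congrArg (fun t : {σ : Equiv.Perm (Fin n) // BigrassmannianPerm σ ∧ FullSupportPerm σ} =>
        ((t.1 ⟨0, by omega⟩ : Fin n) : ℕ)) h
      simp only [f] at h0
      rw [hval, hval] at h0
      simp only [Fin.val_mk] at h0
      have hj := j.isLt
      have hj' := j'.isLt
      rw [Nat.mod_eq_of_lt (by omega), Nat.mod_eq_of_lt (by omega)] at h0
      apply Fin.ext
      omega
    · rintro ⟨σ, hσ⟩
      rw [hiff] at hσ
      obtain ⟨i, k, hi, hk, hik, h1, h2⟩ := hσ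
      refine ⟨⟨k-1, by omega⟩, ?_⟩
      apply Subtype.ext
      apply Equiv.ext
      intro x
      apply Fin.ext
      show (((Equiv.addRight _) x : Fin n) : ℕ) = _
      rw [hval]
      simp only [Fin.val_mk]
      have hxlt := x.isLt
      by_cases hxi : (x:ℕ) < i
      · rw [h1 x hxi, Nat.mod_eq_of_lt (by omega)]
        omega
      · rw [h2 x (by omega), Nat.mod_eq_sub_mod (by omega), Nat.mod_eq_of_lt (by omega)]
        omega
  rw [← Nat.card_eq_of_bijective f hbij, Nat.card_eq_fintype_card, Fintype.card_fin]

end NilpotencyIndices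
end

section
/- For every n ≥ 5, there is no bigrassmannian permutation σ ∈ S_n of full support satisfying the orthogonality condition, where the orthogonality condition for a bigrassmannian σ with unique left descent r and unique right descent s states: (a) for every a ∈ {1, …, n−1} with |a − s| ≥ 2 and σ(a+1) = σ(a) + 1, one has |σ(a) − r| ≥ 2; and (b) for every a ∈ {1, …, n−1} with |a − r| ≥ 2 and σ⁻¹(a+1) = σ⁻¹(a) + 1, one has |σ⁻¹(a) − s| ≥ 2. (This is the statement BiGr⊥°(A_m) = ∅ for m > 3, with m = n − 1.) -/
namespace NilpotencyIndices


section AuxLemmas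

variable {n : ℕ}

lemma fs_inv (σ : Equiv.Perm (Fin n)) (h : FullSupportPerm σ) : FullSupportPerm σ⁻¹ := by
  intro m hm1 hm2 heq
  apply h m hm1 hm2
  conv_lhs => rw [← heq]
  rw [← Set.image_comp]
  simp [Function.comp_def, Equiv.Perm.coe_inv]

lemma not_descent_lt (σ : Equiv.Perm (Fin n)) (s : Fin n)
    (hru : ∀ a, IsRightDescentPerm σ a → a = s) :
    ∀ a b : Fin n, (b : ℕ) = (a : ℕ) + 1 → a ≠ s → (σ a : ℕ) < (σ b : ℕ) := by
  intro a b hb has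
  have hne : σ b ≠ σ a := by
    intro h
    have hba : (b : ℕ) = (a : ℕ) := congrArg Fin.val (σ.injective h)
    omega
  rcases lt_or_gt_of_ne hne with h | h
  · exact absurd (hru a ⟨b, hb, h⟩) has
  · exact Fin.lt_def.mp h

lemma mono_after (σ : Equiv.Perm (Fin n)) (s : Fin n)
    (hru : ∀ a, IsRightDescentPerm σ a → a = s) :
    ∀ k : ℕ, ∀ p q : Fin n, (q : ℕ) = (p : ℕ) + k → (s : ℕ) < (p : ℕ) →
      (σ p : ℕ) ≤ (σ q : ℕ) := by
  intro k
  induction k with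
  | zero =>
    intro p q hq hp
    have hqp : q = p := Fin.ext (by omega)
    rw [hqp]
  | succ k ih =>
    intro p q hq hp
    have hq' : (p : ℕ) + k < n := by have := q.isLt; omega
    have h1 := ih p ⟨(p : ℕ) + k, hq'⟩ rfl hp
    have h2 : (σ ⟨(p : ℕ) + k, hq'⟩ : ℕ) < (σ q : ℕ) := by
      refine not_descent_lt σ s hru _ _ (show (q : ℕ) = (p : ℕ) + k + 1 by omega) ?_
      intro h
      have h3 : (p : ℕ) + k = (s : ℕ) := congrArg Fin.val h
      omega
    omega

lemma minpos (hn : 0 < n) (σ : Equiv.Perm (Fin n)) (s : Fin n)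
    (hru : ∀ a, IsRightDescentPerm σ a → a = s)
    (h0 : σ ⟨0, hn⟩ ≠ ⟨0, hn⟩) :
    (σ⁻¹ ⟨0, hn⟩ : ℕ) = (s : ℕ) + 1 := by
  obtain ⟨p, hp⟩ : ∃ p, p = σ⁻¹ ⟨0, hn⟩ := ⟨_, rfl⟩
  have hσp : σ p = ⟨0, hn⟩ := by rw [hp, Equiv.Perm.coe_inv, Equiv.apply_symm_apply]
  have hp0 : (p : ℕ) ≠ 0 := by
    intro h
    apply h0
    have hpe : (⟨0, hn⟩ : Fin n) = p := Fin.ext (show 0 = (p : ℕ) from h.symm)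
    conv_lhs => rw [hpe]
    exact hσp
  have ha : ((p : ℕ) - 1) < n := by have := p.isLt; omega
  have hvne : (σ ⟨(p : ℕ) - 1, ha⟩ : ℕ) ≠ 0 := by
    intro h
    have h1 : σ ⟨(p : ℕ) - 1, ha⟩ = σ p := by
      rw [hσp]; exact Fin.ext h
    have h2 : (p : ℕ) - 1 = (p : ℕ) := congrArg Fin.val (σ.injective h1)
    omega
  have hd : IsRightDescentPerm σ ⟨(p : ℕ) - 1, ha⟩ := by
    refine ⟨p, show (p : ℕ) = (p : ℕ) - 1 + 1 by omega, ?_⟩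
    rw [hσp]
    exact Fin.lt_def.mpr (Nat.pos_of_ne_zero hvne)
  have h3 : (p : ℕ) - 1 = (s : ℕ) := congrArg Fin.val (hru _ hd)
  rw [← hp]
  omega

lemma maxpos (hn : 2 ≤ n) (σ : Equiv.Perm (Fin n)) (s : Fin n)
    (hru : ∀ a, IsRightDescentPerm σ a → a = s)
    (hfs : FullSupportPerm σ) :
    (σ⁻¹ ⟨n - 1, by omega⟩ : ℕ) = (s : ℕ) := by
  obtain ⟨p, hp⟩ : ∃ p, p = σ⁻¹ ⟨n - 1, by omega⟩ := ⟨_, rfl⟩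
  have hσp : σ p = ⟨n - 1, by omega⟩ := by rw [hp, Equiv.Perm.coe_inv, Equiv.apply_symm_apply]
  have hpn : (p : ℕ) ≠ n - 1 := by
    intro h
    apply hfs (n - 1) (by omega) le_rfl
    have hpe : (⟨n - 1, by omega⟩ : Fin n) = p := Fin.ext (show n - 1 = (p : ℕ) from h.symm)
    have hfix : σ ⟨n - 1, by omega⟩ = ⟨n - 1, by omega⟩ := by
      conv_lhs => rw [hpe]
      exact hσp
    -- image of the complement of a fixed point
    ext y
    constructor
    · rintro ⟨x, hx, rfl⟩
      simp only [Set.mem_setOf_eq] at hx ⊢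
      have hne : σ x ≠ ⟨n - 1, by omega⟩ := by
        intro hh
        rw [← hfix] at hh
        have h1 : (x : ℕ) = n - 1 := congrArg Fin.val (σ.injective hh)
        omega
      have h1 : (σ x : ℕ) ≠ n - 1 := fun hh => hne (Fin.ext hh)
      have := (σ x).isLt
      omega
    · intro hy
      simp only [Set.mem_setOf_eq] at hy
      refine ⟨σ⁻¹ y, ?_, σ.apply_symm_apply y⟩
      simp only [Set.mem_setOf_eq]
      have hne : σ⁻¹ y ≠ ⟨n - 1, by omega⟩ := by
        intro hh
        have h1 : y = σ ⟨n - 1, by omega⟩ := by rw [← hh, Equiv.Perm.coe_inv, Equiv.apply_symm_apply]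
        rw [hfix] at h1
        have h2 : (y : ℕ) = n - 1 := congrArg Fin.val h1
        omega
      have h1 : (σ⁻¹ y : ℕ) ≠ n - 1 := fun hh => hne (Fin.ext hh)
      have := (σ⁻¹ y).isLt
      omega
  have hlt : (p : ℕ) + 1 < n := by have := p.isLt; omega
  have hvne : (σ ⟨(p : ℕ) + 1, hlt⟩ : ℕ) ≠ n - 1 := by
    intro h
    have h1 : σ ⟨(p : ℕ) + 1, hlt⟩ = σ p := by
      rw [hσp]; exact Fin.ext h
    have h2 : (p : ℕ) + 1 = (p : ℕ) := congrArg Fin.val (σ.injective h1)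
    omega
  have hd : IsRightDescentPerm σ p := by
    refine ⟨⟨(p : ℕ) + 1, hlt⟩, rfl, ?_⟩
    rw [hσp]
    refine Fin.lt_def.mpr ?_
    show (σ ⟨(p : ℕ) + 1, hlt⟩ : ℕ) < n - 1
    have := (σ ⟨(p : ℕ) + 1, hlt⟩).isLt
    omega
  have h3 : (p : ℕ) = (s : ℕ) := congrArg Fin.val (hru _ hd)
  rw [← hp]
  exact h3


lemma key (hn : 5 ≤ n) (σ : Equiv.Perm (Fin n)) (r s : Fin n)
    (hl : IsLeftDescentPerm σ r) (hlu : ∀ a, IsLeftDescentPerm σ a → a = r)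
    (hr : IsRightDescentPerm σ s) (hru : ∀ a, IsRightDescentPerm σ a → a = s)
    (hfs : FullSupportPerm σ) :
    ∀ p : Fin n, (s : ℕ) < (p : ℕ) → (σ p : ℕ) + ((s : ℕ) + 1) = (p : ℕ) := by
  have hnpos : 0 < n := by omega
  -- σ 0 ≠ 0 from full support at m = 1
  have h0 : σ ⟨0, hnpos⟩ ≠ ⟨0, hnpos⟩ := by
    intro h
    apply hfs 1 le_rfl (by omega)
    have hset : {x : Fin n | (x : ℕ) < 1} = {(⟨0, hnpos⟩ : Fin n)} := by
      ext x
      simp only [Set.mem_setOf_eq, Set.mem_singleton_iff, Fin.ext_iff]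
      omega
    rw [hset, Set.image_singleton, h]
  have hmin : (σ⁻¹ ⟨0, hnpos⟩ : ℕ) = (s : ℕ) + 1 := minpos hnpos σ s hru h0
  -- σ (n-1) = r
  have hmax : (σ ⟨n - 1, by omega⟩ : ℕ) = (r : ℕ) :=
    maxpos (n := n) (by omega) σ⁻¹ r hlu (fs_inv σ hfs)
  -- main claim by induction on the offset
  have main : ∀ j : ℕ, ∀ p : Fin n, (p : ℕ) = (s : ℕ) + 1 + j →
      (σ p : ℕ) = j := by
    intro j
    induction j with
    | zero =>
      intro p hp
      have hpe : σ⁻¹ ⟨0, hnpos⟩ = p := Fin.ext (by omega)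
      have := congrArg σ hpe
      rw [Equiv.Perm.coe_inv, σ.apply_symm_apply] at this
      rw [← this]
    | succ j ih =>
      intro p hp
      have hsn : (s : ℕ) + 1 + j < n := by have := p.isLt; omega
      have hIH := ih ⟨(s : ℕ) + 1 + j, hsn⟩ rfl
      -- j ≠ r
      have hjr : j ≠ (r : ℕ) := by
        intro h
        have heq : σ ⟨(s : ℕ) + 1 + j, hsn⟩ = σ ⟨n - 1, by omega⟩ :=
          Fin.ext (by omega)
        have := congrArg Fin.val (σ.injective heq)
        simp at this
        have := p.isLt
        omega
      have hjn : j + 1 < n := by have := p.isLt; omega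
      -- σ⁻¹ j = s+1+j
      have hinvj : σ⁻¹ ⟨j, by omega⟩ = ⟨(s : ℕ) + 1 + j, hsn⟩ := by
        have : σ ⟨(s : ℕ) + 1 + j, hsn⟩ = ⟨j, by omega⟩ := Fin.ext hIH
        rw [← this, Equiv.Perm.coe_inv, σ.symm_apply_apply]
      -- σ⁻¹ (j+1) > s+1+j
      have hF2 : ((s : ℕ) + 1 + j) < (σ⁻¹ ⟨j + 1, hjn⟩ : ℕ) := by
        have := not_descent_lt σ⁻¹ r hlu ⟨j, by omega⟩ ⟨j + 1, hjn⟩ (by simp)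
          (by
            intro h
            exact hjr (by have := congrArg Fin.val h; simpa using this))
        rw [hinvj] at this
        simpa using this
      set q := σ⁻¹ ⟨j + 1, hjn⟩ with hqdef
      have hσq : (σ q : ℕ) = j + 1 := by rw [hqdef, Equiv.Perm.coe_inv, σ.apply_symm_apply]
      have hple : (q : ℕ) = (p : ℕ) + ((q : ℕ) - (p : ℕ)) ∨ (q:ℕ) ≤ (p:ℕ) := by omega
      -- monotonicity : σ p ≤ σ q since s < p ≤ q  (need p ≤ q)
      have hmono : (σ p : ℕ) ≤ j + 1 := by
        rcases le_or_gt (p : ℕ) (q : ℕ) with hle | hlt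
        · have := mono_after σ s hru ((q : ℕ) - (p : ℕ)) p q (by omega) (by omega)
          omega
        ·
          omega
      have hgt : (σ ⟨(s : ℕ) + 1 + j, hsn⟩ : ℕ) < (σ p : ℕ) := by
        apply not_descent_lt σ s hru _ _ (by simp; omega)
        intro h
        have := congrArg Fin.val h
        simp at this
        omega
      omega
  intro p hp
  have := main ((p : ℕ) - ((s : ℕ) + 1)) p ?_
  · omega
  · -- need p = s+1+(p - (s+1)), i.e. s+1 ≤ p
    omega


end AuxLemmas

/-- For `n ≥ 5` there is no bigrassmannian permutation of full support in `S_n`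
satisfying the orthogonality condition (`BiGr⊥°(A_m) = ∅` for `m > 3`). -/
theorem no_orthogonal_bigrassmannian_full_support_perm (n : ℕ) (hn : 5 ≤ n) :
    ¬ ∃ (σ : Equiv.Perm (Fin n)) (r s : Fin n),
        (IsLeftDescentPerm σ r ∧ ∀ a : Fin n, IsLeftDescentPerm σ a → a = r) ∧
        (IsRightDescentPerm σ s ∧ ∀ a : Fin n, IsRightDescentPerm σ a → a = s) ∧
        FullSupportPerm σ ∧
        (∀ a b : Fin n, (b : ℕ) = (a : ℕ) + 1 → 2 ≤ Nat.dist (a : ℕ) (s : ℕ) →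
          (σ b : ℕ) = (σ a : ℕ) + 1 → 2 ≤ Nat.dist ((σ a : ℕ)) ((r : ℕ))) ∧
        (∀ a b : Fin n, (b : ℕ) = (a : ℕ) + 1 → 2 ≤ Nat.dist (a : ℕ) (r : ℕ) →
          (σ⁻¹ b : ℕ) = (σ⁻¹ a : ℕ) + 1 → 2 ≤ Nat.dist ((σ⁻¹ a : ℕ)) ((s : ℕ))) := by
  rintro ⟨σ, r, s, ⟨hl, hlu⟩, ⟨hr, hru⟩, hfs, hA, hB⟩
  have hs1 : (s : ℕ) + 1 < n := by
    obtain ⟨b, hb, -⟩ := hr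
    have := b.isLt
    omega
  have hr1 : (r : ℕ) + 1 < n := by
    obtain ⟨b, hb, -⟩ := hl
    have := b.isLt
    omega
  have hl' : IsLeftDescentPerm σ⁻¹ s := by
    show IsRightDescentPerm σ⁻¹⁻¹ s
    rw [inv_inv]
    exact hr
  have hlu' : ∀ a, IsLeftDescentPerm σ⁻¹ a → a = s := by
    intro a ha
    apply hru
    have : IsRightDescentPerm σ⁻¹⁻¹ a := ha
    rwa [inv_inv] at this
  have Kσ := key hn σ r s hl hlu hr hru hfs
  have Kinv := key hn σ⁻¹ s r hl' hlu' hl hlu (fs_inv σ hfs)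
  -- named points
  obtain ⟨p0, hp0⟩ : ∃ p : Fin n, (p : ℕ) = 0 := ⟨⟨0, by omega⟩, rfl⟩
  obtain ⟨p1, hp1⟩ : ∃ p : Fin n, (p : ℕ) = 1 := ⟨⟨1, by omega⟩, rfl⟩
  obtain ⟨pN, hpN⟩ : ∃ p : Fin n, (p : ℕ) = n - 1 := ⟨⟨n - 1, by omega⟩, rfl⟩
  -- σ (n-1) = r
  have hmax : (σ pN : ℕ) = (r : ℕ) := by
    have h1 : ((σ⁻¹)⁻¹ ⟨n - 1, by omega⟩ : ℕ) = (r : ℕ) :=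
      maxpos (n := n) (by omega) σ⁻¹ r hlu (fs_inv σ hfs)
    rw [inv_inv] at h1
    have h2 : pN = ⟨n - 1, by omega⟩ := Fin.ext (show (pN : ℕ) = n - 1 from hpN)
    rw [h2]
    exact h1
  have hKn := Kσ pN (by omega)
  have hrs : (r : ℕ) + (s : ℕ) = n - 2 := by omega
  rcases le_or_gt 2 (s : ℕ) with hs2 | hs2
  · -- condition (a) at positions 0, 1
    obtain ⟨v1, hv1⟩ : ∃ v : Fin n, (v : ℕ) = (r : ℕ) + 1 := ⟨⟨(r : ℕ) + 1, by omega⟩, rfl⟩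
    obtain ⟨v2, hv2⟩ : ∃ v : Fin n, (v : ℕ) = (r : ℕ) + 2 := ⟨⟨(r : ℕ) + 2, by omega⟩, rfl⟩
    have e1 := Kinv v1 (by omega)
    have e2 := Kinv v2 (by omega)
    have f1 : (σ p0 : ℕ) = (r : ℕ) + 1 := by
      have h1 : σ⁻¹ v1 = p0 := Fin.ext (by omega)
      have h1' : σ p0 = v1 := by rw [← h1, Equiv.Perm.coe_inv, σ.apply_symm_apply]
      rw [h1', hv1]
    have f2 : (σ p1 : ℕ) = (r : ℕ) + 2 := by
      have h2 : σ⁻¹ v2 = p1 := Fin.ext (by omega)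
      have h2' : σ p1 = v2 := by rw [← h2, Equiv.Perm.coe_inv, σ.apply_symm_apply]
      rw [h2', hv2]
    have hcon := hA p0 p1 (by omega) (by rw [hp0]; simp [Nat.dist]; omega) (by omega)
    rw [f1] at hcon
    simp [Nat.dist] at hcon
  · -- r ≥ 2 : condition (b) at values 0, 1
    have hr2 : 2 ≤ (r : ℕ) := by omega
    obtain ⟨q1, hq1⟩ : ∃ q : Fin n, (q : ℕ) = (s : ℕ) + 1 := ⟨⟨(s : ℕ) + 1, by omega⟩, rfl⟩
    obtain ⟨q2, hq2⟩ : ∃ q : Fin n, (q : ℕ) = (s : ℕ) + 2 := ⟨⟨(s : ℕ) + 2, by omega⟩, rfl⟩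
    have e1 := Kσ q1 (by omega)
    have e2 := Kσ q2 (by omega)
    have f1 : (σ⁻¹ p0 : ℕ) = (s : ℕ) + 1 := by
      have h1 : σ q1 = p0 := Fin.ext (by omega)
      have h1' : σ⁻¹ p0 = q1 := by rw [← h1, Equiv.Perm.coe_inv, σ.symm_apply_apply]
      rw [h1', hq1]
    have f2 : (σ⁻¹ p1 : ℕ) = (s : ℕ) + 2 := by
      have h2 : σ q2 = p1 := Fin.ext (by omega)
      have h2' : σ⁻¹ p1 = q2 := by rw [← h2, Equiv.Perm.coe_inv, σ.symm_apply_apply]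
      rw [h2', hq2]
    have hcon := hB p0 p1 (by omega) (by rw [hp0]; simp [Nat.dist]; omega) (by omega)
    rw [f1] at hcon
    simp [Nat.dist] at hcon

end NilpotencyIndices
end
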